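/- arXiv:1509.02117 — 5 statements merged into one kernel-verified Lean document; each statement's English description precedes it below -/
import Mathlib

section
/- For every (n,r)-matroid M, the support of M is an order filter in the dominance order on (n,r)-sequences: if g_r(M) > 0 and s ⊵ r, then g_s(M) > 0. -/
open MvPolynomial
open scoped Classical

/-- The dominance order on bit sequences: `Dominates s t` means `s ⊵ t`, i.e. every
prefix of `s` has at least as many `1`s (`true`s) as the corresponding prefix of `t`. -/
def Dominates (s t : List Bool) : Prop :=
  ∀ j : ℕ, (t.take j).count true ≤ (s.take j).count true

/-- The indicator bit sequence of a subset `B` of `{1,…,n}` (modelled as `Fin n`). -/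
def indList {n : ℕ} (B : Finset (Fin n)) : List Bool :=
  List.ofFn fun i : Fin n => decide (i ∈ B)

/-- The finset of `(n,r)`-sequences: bit sequences of length `n` with exactly `r` ones. -/
def seqs (n r : ℕ) : Finset (List Bool) :=
  ((Finset.univ : Finset (Fin n → Bool)).image List.ofFn).filter fun l => l.count true = r

/-- The Tutte polynomial determined by a rank function `rk` on subsets of an `n`-element
ground set, where `r` is the rank of the whole ground set.  The variable `X 0` plays the
role of `x` and `X 1` plays the role of `y`. -/
noncomputable def tutte (K : Type*) [Field K] {n : ℕ} (r : ℕ) (rk : Finset (Fin n) → ℕ) :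
    MvPolynomial (Fin 2) K :=
  ∑ A : Finset (Fin n), (X 0 - 1) ^ (r - rk A) * (X 1 - 1) ^ (A.card - rk A)

/-- `B` is a basis of the freedom matroid `F(s)`: it has `wt s` elements and its
indicator sequence is dominated by `s`. -/
def IsFreedomBasis (s : List Bool) (B : Finset (Fin s.length)) : Prop :=
  B.card = s.count true ∧ Dominates s (indList B)

/-- The rank function of the freedom matroid `F(s)`: the rank of a set is the largest
size of its intersection with a basis. -/
noncomputable def freedomRk (s : List Bool) (A : Finset (Fin s.length)) : ℕ :=
  (Finset.univ.filter fun B => IsFreedomBasis s B).sup fun B => (A ∩ B).card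

/-- The Tutte polynomial of the freedom matroid `F(s)`. -/
noncomputable def freedomTutte (K : Type*) [Field K] (s : List Bool) :
    MvPolynomial (Fin 2) K :=
  tutte K (s.count true) (freedomRk s)

/-- The rank of a set in a matroid: the largest cardinality of an independent subset. -/
noncomputable def mrank {n : ℕ} (M : Matroid (Fin n)) (A : Set (Fin n)) : ℕ :=
  (Finset.univ.filter fun I : Finset (Fin n) =>
    M.Indep ↑I ∧ (↑I : Set (Fin n)) ⊆ A).sup Finset.card

/-- The set `{π(1),…,π(m)}` of the first `m` values of a permutation. -/
def prefFinset {n : ℕ} (π : Equiv.Perm (Fin n)) (m : ℕ) : Finset (Fin n) :=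
  (Finset.univ.filter fun i : Fin n => (i : ℕ) < m).image π

/-- The rank sequence of a permutation `π` with respect to a rank function `rk`:
its `j`-th entry is `1` (`true`) exactly when `rk {π(1),…,π(j)} = rk {π(1),…,π(j-1)} + 1`. -/
def rankSeq {n : ℕ} (rk : Finset (Fin n) → ℕ) (π : Equiv.Perm (Fin n)) : List Bool :=
  List.ofFn fun j : Fin n =>
    decide (rk (prefFinset π ((j : ℕ) + 1)) = rk (prefFinset π (j : ℕ)) + 1)

/-- `gCoeff rk l` is the number of permutations of the ground set whose rank sequence
is the bit sequence `l`; these are the coefficients of the `G`-invariant. -/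
noncomputable def gCoeff {n : ℕ} (rk : Finset (Fin n) → ℕ) (l : List Bool) : ℕ :=
  (Finset.univ.filter fun π : Equiv.Perm (Fin n) => rankSeq rk π = l).card

/-- The `G`-invariant, as an element of the free `K`-module on all bit sequences. -/
noncomputable def Ginv (K : Type*) [Field K] {n : ℕ} (rk : Finset (Fin n) → ℕ) :
    List Bool →₀ K :=
  ∑ π : Equiv.Perm (Fin n), Finsupp.single (rankSeq rk π) 1

/-- The value of the specialization `Sp` on the symbol `[l]`. -/
noncomputable def spPoly (K : Type*) [Field K] (l : List Bool) : MvPolynomial (Fin 2) K :=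
  ∑ m ∈ Finset.range (l.length + 1),
    ((m.factorial * (l.length - m).factorial : ℕ) : K)⁻¹ •
      ((X 0 - 1) ^ (l.count true - (l.take m).count true) *
        (X 1 - 1) ^ (m - (l.take m).count true))

/-- The specialization `Sp` as a linear map on the free module on bit-sequence symbols. -/
noncomputable def SpMap (K : Type*) [Field K] :
    (List Bool →₀ K) →ₗ[K] MvPolynomial (Fin 2) K :=
  Finsupp.linearCombination K (spPoly K)

/-- `G(n,r)`: the span of the `(n,r)`-sequence symbols, a subspace of dimension
`binomial(n,r)` of the free module on all bit sequences. -/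
noncomputable def Gspace (K : Type*) [Field K] (n r : ℕ) : Submodule K (List Bool →₀ K) :=
  Submodule.span K ((fun l => Finsupp.single l (1 : K)) '' ↑(seqs n r))

/-- `T(n,r)`: the span of the Tutte polynomials of all `(n,r)`-matroids. -/
noncomputable def Tspace (K : Type*) [Field K] (n r : ℕ) :
    Submodule K (MvPolynomial (Fin 2) K) :=
  Submodule.span K {p | ∃ M : Matroid (Fin n), M.E = Set.univ ∧ mrank M Set.univ = r ∧
    p = tutte K r fun A : Finset (Fin n) => mrank M ↑A}

/-- The bit sequence `0^a 1^b 0^c 1^d` associated to a quadruple `(a,b,c,d)`;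
such sequences are the join-irreducible ones. -/
def joinList (q : ℕ × ℕ × ℕ × ℕ) : List Bool :=
  List.replicate q.1 false ++ List.replicate q.2.1 true ++
    List.replicate q.2.2.1 false ++ List.replicate q.2.2.2 true

/-- The bit sequence `1^a 0^b 1^c 0^d` associated to a quadruple `(a,b,c,d)`;
such sequences are the meet-irreducible ones. -/
def meetList (q : ℕ × ℕ × ℕ × ℕ) : List Bool :=
  List.replicate q.1 true ++ List.replicate q.2.1 false ++
    List.replicate q.2.2.1 true ++ List.replicate q.2.2.2 false

/-- Quadruples `(a,b,c,d)` with `a+b+c+d = n` and `b+d = r`, indexing the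
join-irreducible `(n,r)`-sequences `0^a 1^b 0^c 1^d`. -/
def joinIdx (n r : ℕ) : Type :=
  {q : ℕ × ℕ × ℕ × ℕ // q.1 + q.2.1 + q.2.2.1 + q.2.2.2 = n ∧ q.2.1 + q.2.2.2 = r}

/-- Quadruples `(a,b,c,d)` with `a+b+c+d = n` and `a+c = r`, indexing the
meet-irreducible `(n,r)`-sequences `1^a 0^b 1^c 0^d`. -/
def meetIdx (n r : ℕ) : Type :=
  {q : ℕ × ℕ × ℕ × ℕ // q.1 + q.2.1 + q.2.2.1 + q.2.2.2 = n ∧ q.1 + q.2.2.1 = r}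

/-- `f(u) = T(F(u); 1, y)`. -/
noncomputable def fEval (K : Type*) [Field K] (u : List Bool) : MvPolynomial (Fin 2) K :=
  MvPolynomial.aeval (fun i : Fin 2 => if i = 0 then 1 else X 1) (freedomTutte K u)

/-- `g(u) = T(F(u); x, 1)`. -/
noncomputable def gEval (K : Type*) [Field K] (u : List Bool) : MvPolynomial (Fin 2) K :=
  MvPolynomial.aeval (fun i : Fin 2 => if i = 0 then X 0 else 1) (freedomTutte K u)

/-- `τ(u) = T(F(u); 1, 1)`. -/
noncomputable def tauEval (K : Type*) [Field K] (u : List Bool) : MvPolynomial (Fin 2) K :=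
  MvPolynomial.aeval (fun _ : Fin 2 => (1 : MvPolynomial (Fin 2) K)) (freedomTutte K u)


section Aux

/-- prefix count -/
def pc (u : List Bool) (m : ℕ) : ℕ := (u.take m).count true

/-- the bit at position i, as 0 or 1 -/
def bitv (u : List Bool) (i : ℕ) : ℕ := (u[i]?.toList).count true

lemma pc_succ (u : List Bool) (m : ℕ) : pc u (m + 1) = pc u m + bitv u m := by
  simp [pc, bitv, List.take_succ, List.count_append]

lemma pc_eq_sum (u : List Bool) (m : ℕ) : pc u m = ∑ i ∈ Finset.range m, bitv u i := by
  induction m with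
  | zero => simp [pc]
  | succ m ih => rw [pc_succ, Finset.sum_range_succ, ih]

lemma bitv_of_lt {u : List Bool} {i : ℕ} (h : i < u.length) :
    bitv u i = if u[i] = true then 1 else 0 := by
  simp [bitv, List.getElem?_eq_getElem h]
  rcases u[i] <;> simp

lemma bitv_of_ge {u : List Bool} {i : ℕ} (h : u.length ≤ i) : bitv u i = 0 := by
  simp [bitv, List.getElem?_eq_none h]

lemma bitv_le_one (u : List Bool) (i : ℕ) : bitv u i ≤ 1 := by
  rcases lt_or_ge i u.length with h | h
  · rw [bitv_of_lt h]; split <;> simp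
  · rw [bitv_of_ge h]; simp

lemma pc_length (u : List Bool) : pc u u.length = u.count true := by
  simp [pc]

lemma pc_of_ge {u : List Bool} {m : ℕ} (h : u.length ≤ m) : pc u m = u.count true := by
  simp [pc, List.take_of_length_le h]

lemma pc_mono (u : List Bool) {m m' : ℕ} (h : m ≤ m') : pc u m ≤ pc u m' := by
  rw [pc_eq_sum, pc_eq_sum]
  exact Finset.sum_le_sum_of_subset (Finset.range_subset_range.2 h)

/-- lists are determined by length and prefix counts -/
lemma eq_of_pc_eq {u v : List Bool} (hl : u.length = v.length)
    (h : ∀ m, pc u m = pc v m) : u = v := by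
  apply List.ext_getElem hl
  intro i h1 h2
  have hb : bitv u i = bitv v i := by
    have e1 := pc_succ u i
    have e2 := pc_succ v i
    rw [h i, h (i+1)] at e1
    omega
  rw [bitv_of_lt h1, bitv_of_lt h2] at hb
  rcases hu : u[i] <;> rcases hv : v[i] <;> simp_all

/-- the swapped list: bit `p` becomes true, bit `p+1` becomes false -/
def swapList (u : List Bool) (p : ℕ) : List Bool := (u.set p true).set (p+1) false

lemma swapList_length (u : List Bool) (p : ℕ) : (swapList u p).length = u.length := by
  simp [swapList]

lemma swapList_getElem (u : List Bool) (p i : ℕ) (h : i < u.length) :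
    (swapList u p)[i]'(by simpa [swapList_length]) =
      if i = p then true else if i = p + 1 then false else u[i] := by
  simp only [swapList]
  rcases eq_or_ne i (p+1) with rfl | h1
  · simp [List.getElem_set]
  · rw [List.getElem_set_ne (by omega)]
    rcases eq_or_ne i p with rfl | h2
    · simp [List.getElem_set_self, h1]
    · rw [List.getElem_set_ne (by omega)]
      simp [h1, h2]

lemma swapList_bitv {u : List Bool} {p : ℕ} (hp : p + 1 < u.length) (i : ℕ) :
    bitv (swapList u p) i = if i = p then 1 else if i = p + 1 then 0 else bitv u i := by
  rcases lt_or_ge i u.length with h | h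
  · rw [bitv_of_lt (by simpa [swapList_length] : i < (swapList u p).length),
      swapList_getElem u p i h]
    rcases eq_or_ne i p with rfl | h1
    · simp
    · rcases eq_or_ne i (p+1) with rfl | h2
      · simp [h1]
      · simp [h1, h2, bitv_of_lt h]
  · rw [bitv_of_ge (by simpa [swapList_length] : (swapList u p).length ≤ i),
      bitv_of_ge h]
    have : i ≠ p := by omega
    have : i ≠ p + 1 := by omega
    simp_all

lemma swapList_pc {u : List Bool} {p : ℕ} (hp : p + 1 < u.length)
    (h0 : u[p]'(by omega) = false) (h1 : u[p+1]'hp = true) (m : ℕ) :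
    pc (swapList u p) m = pc u m + (if m = p + 1 then 1 else 0) := by
  have b0 : bitv u p = 0 := by rw [bitv_of_lt (by omega)]; simp [h0]
  have b1 : bitv u (p+1) = 1 := by rw [bitv_of_lt hp]; simp [h1]
  induction m with
  | zero => simp [pc]
  | succ m ih =>
    rw [pc_succ, pc_succ, ih, swapList_bitv hp]
    rcases eq_or_ne m p with rfl | hm1
    · simp [b0]
    · rcases eq_or_ne m (p+1) with rfl | hm2
      · simp [b1]
      · have : m + 1 ≠ p + 1 := by omega
        simp [hm1, hm2, this]

lemma swapList_count {u : List Bool} {p : ℕ} (hp : p + 1 < u.length)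
    (h0 : u[p]'(by omega) = false) (h1 : u[p+1]'hp = true) :
    (swapList u p).count true = u.count true := by
  rw [← pc_of_ge (le_refl (swapList u p).length), swapList_length,
    swapList_pc hp h0 h1, pc_length]
  simp [Nat.ne_of_gt hp]

lemma bitv_eq_zero_iff {u : List Bool} {i : ℕ} (h : i < u.length) :
    bitv u i = 0 ↔ u[i] = false := by
  rw [bitv_of_lt h]; rcases hb : u[i] <;> simp

lemma bitv_eq_one_iff {u : List Bool} {i : ℕ} (h : i < u.length) :
    bitv u i = 1 ↔ u[i] = true := by
  rw [bitv_of_lt h]; rcases hb : u[i] <;> simp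

lemma exists_swap1 {s u : List Bool} (hl : u.length = s.length)
    (hc : u.count true = s.count true) (hd : Dominates s u)
    (hne : ∃ m, pc u m < pc s m) :
    ∃ p, ∃ h : p + 1 < u.length, u[p]'(by omega) = false ∧ u[p+1]'h = true ∧
      pc u (p+1) + 1 ≤ pc s (p+1) := by
  have hdom : ∀ m, pc u m ≤ pc s m := hd
  classical
  obtain ⟨j, hj, hjmin⟩ : ∃ j, pc u j < pc s j ∧ ∀ m < j, pc u m = pc s m :=
    ⟨Nat.find hne, Nat.find_spec hne, fun m hm =>
      le_antisymm (hdom m) (not_lt.1 (Nat.find_min hne hm))⟩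
  have hj1 : 1 ≤ j := by
    rcases Nat.eq_zero_or_pos j with h | h
    · rw [h] at hj; simp [pc] at hj
    · exact h
  have hprev : pc u (j-1) = pc s (j-1) := hjmin _ (by omega)
  have hstep : pc u (j-1+1) = pc u (j-1) + bitv u (j-1) := pc_succ u (j-1)
  have hsteps : pc s (j-1+1) = pc s (j-1) + bitv s (j-1) := pc_succ s (j-1)
  have hj' : j - 1 + 1 = j := by omega
  rw [hj'] at hstep hsteps
  have hbs := bitv_le_one s (j-1)
  have hbu : bitv u (j-1) = 0 := by omega
  -- find the next 1 in u at position ≥ j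
  have hex : ∃ m, j ≤ m ∧ bitv u m = 1 := by
    by_contra hno
    push_neg at hno
    have hz : ∀ m, j ≤ m → bitv u m = 0 := fun m hm => by
      have := hno m hm
      have := bitv_le_one u m
      omega
    have hconst : ∀ m, j ≤ m → pc u m = pc u j := by
      intro m hm
      induction m, hm using Nat.le_induction with
      | base => rfl
      | succ m hm ih => rw [pc_succ, hz m hm, ih]; omega
    have h1 : pc u (u.length + j) = pc u j := hconst _ (by omega)
    have h2 : pc u (u.length + j) = u.count true := pc_of_ge (by omega)
    have h3 : pc s j ≤ s.count true := by
      rw [← pc_of_ge (le_refl s.length)]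
      exact pc_mono s (by
        by_contra hgt
        push_neg at hgt
        rw [pc_of_ge (show s.length ≤ j by omega),
          pc_of_ge (show u.length ≤ j by omega)] at hj
        omega)
    omega
  obtain ⟨k, hk, hkmin⟩ : ∃ k, (j ≤ k ∧ bitv u k = 1) ∧
      ∀ m < k, ¬(j ≤ m ∧ bitv u m = 1) :=
    ⟨Nat.find hex, Nat.find_spec hex, fun m hm => Nat.find_min hex hm⟩
  have hkn : k < u.length := by
    by_contra hge
    rw [bitv_of_ge (by omega)] at hk
    omega
  have hzero : ∀ i, j - 1 ≤ i → i < k → bitv u i = 0 := by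
    intro i h1 h2
    rcases eq_or_ne i (j-1) with rfl | hne'
    · exact hbu
    · have hji : j ≤ i := by omega
      have := hkmin i h2
      have := bitv_le_one u i
      omega
  have hpck : pc u k = pc u (j-1) := by
    have : ∀ m, j - 1 ≤ m → m ≤ k → pc u m = pc u (j-1) := by
      intro m h1 h2
      induction m, h1 using Nat.le_induction with
      | base => rfl
      | succ m hm ih =>
        rw [pc_succ, hzero m hm (by omega), ih (by omega)]; omega
    exact this k (by omega) le_rfl
  refine ⟨k - 1, by omega, ?_, ?_, ?_⟩
  · rw [← bitv_eq_zero_iff]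
    exact hzero _ (by omega) (by omega)
  · have hk1 : k - 1 + 1 = k := by omega
    rw [← bitv_eq_one_iff]
    simp only [hk1]
    exact hk.2
  · have hk1 : k - 1 + 1 = k := by omega
    rw [hk1, hpck]
    have : pc s j ≤ pc s k := pc_mono s hk.1
    omega

section PrefLemmas
variable {n : ℕ}

def cutSet (n m : ℕ) : Finset (Fin n) := Finset.univ.filter fun i : Fin n => (i : ℕ) < m

lemma prefFinset_eq (π : Equiv.Perm (Fin n)) (m : ℕ) :
    prefFinset π m = (cutSet n m).image π := rfl

lemma cutSet_succ {m : ℕ} (hm : m < n) :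
    cutSet n (m + 1) = insert (⟨m, hm⟩ : Fin n) (cutSet n m) := by
  ext x
  simp only [cutSet, Finset.mem_filter, Finset.mem_univ, true_and, Finset.mem_insert]
  rw [Fin.ext_iff]
  simp only [Fin.val_mk]
  omega

lemma prefFinset_succ (π : Equiv.Perm (Fin n)) {m : ℕ} (hm : m < n) :
    prefFinset π (m + 1) = insert (π ⟨m, hm⟩) (prefFinset π m) := by
  rw [prefFinset_eq, prefFinset_eq, cutSet_succ hm, Finset.image_insert]

lemma prefFinset_mul (π : Equiv.Perm (Fin n)) (σ : Equiv.Perm (Fin n)) (m : ℕ) :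
    prefFinset (π * σ) m = ((cutSet n m).image σ).image π := by
  rw [prefFinset_eq, Finset.image_image]
  rfl

lemma mem_image_swap (a b : Fin n) (S : Finset (Fin n)) (x : Fin n) :
    x ∈ S.image (Equiv.swap a b) ↔ Equiv.swap a b x ∈ S := by
  constructor
  · rintro h
    obtain ⟨y, hy, rfl⟩ := Finset.mem_image.1 h
    rwa [Equiv.swap_apply_self]
  · intro h
    exact Finset.mem_image.2 ⟨_, h, Equiv.swap_apply_self a b x⟩

lemma swap_val {p : ℕ} (hp : p + 1 < n) (x : Fin n) :
    ((Equiv.swap (⟨p, by omega⟩ : Fin n) ⟨p+1, hp⟩ x : Fin n) : ℕ) =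
      if (x : ℕ) = p then p + 1 else if (x : ℕ) = p + 1 then p else (x : ℕ) := by
  set a : Fin n := ⟨p, by omega⟩ with ha
  set b : Fin n := ⟨p+1, hp⟩ with hb
  rcases eq_or_ne x a with rfl | hxa
  · rw [Equiv.swap_apply_left]; simp [ha, hb]
  · rcases eq_or_ne x b with rfl | hxb
    · rw [Equiv.swap_apply_right]
      simp only [ha, hb, Fin.val_mk]
      have : p + 1 ≠ p := by omega
      simp [this]
    · rw [Equiv.swap_apply_of_ne_of_ne hxa hxb]
      have h1 : (x : ℕ) ≠ p := fun h => hxa (Fin.ext (by simp [ha, h]))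
      have h2 : (x : ℕ) ≠ p + 1 := fun h => hxb (Fin.ext (by simp [hb, h]))
      simp [h1, h2]

lemma cutSet_swap_fix {p m : ℕ} (hp : p + 1 < n) (h : m ≤ p ∨ p + 2 ≤ m) :
    (cutSet n m).image (Equiv.swap (⟨p, by omega⟩ : Fin n) ⟨p+1, hp⟩) = cutSet n m := by
  ext x
  rw [mem_image_swap]
  simp only [cutSet, Finset.mem_filter, Finset.mem_univ, true_and]
  rw [swap_val hp x]
  split_ifs <;> omega

lemma cutSet_swap_mid {p : ℕ} (hp : p + 1 < n) :
    (cutSet n (p+1)).image (Equiv.swap (⟨p, by omega⟩ : Fin n) ⟨p+1, hp⟩) =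
      insert (⟨p+1, hp⟩ : Fin n) (cutSet n p) := by
  ext x
  rw [mem_image_swap, Finset.mem_insert]
  simp only [cutSet, Finset.mem_filter, Finset.mem_univ, true_and]
  rw [swap_val hp x, Fin.ext_iff]
  simp only [Fin.val_mk]
  split_ifs <;> omega

end PrefLemmas

section MrankLemmas
variable {n : ℕ} {M : Matroid (Fin n)}

lemma mrank_le_of_indep {I : Finset (Fin n)} {A : Set (Fin n)} (h : M.Indep ↑I)
    (hs : (↑I : Set (Fin n)) ⊆ A) : I.card ≤ mrank M A :=
  Finset.le_sup (by simp [h, hs])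

lemma mrank_attained (A : Set (Fin n)) :
    ∃ I : Finset (Fin n), M.Indep ↑I ∧ (↑I : Set (Fin n)) ⊆ A ∧ I.card = mrank M A := by
  obtain ⟨I, hI, hc⟩ := Finset.exists_mem_eq_sup
    (Finset.univ.filter fun I : Finset (Fin n) => M.Indep ↑I ∧ (↑I : Set (Fin n)) ⊆ A)
    ⟨∅, by simp⟩ Finset.card
  simp only [Finset.mem_filter] at hI
  exact ⟨I, hI.2.1, hI.2.2, hc.symm⟩

lemma mrank_mono {A B : Set (Fin n)} (h : A ⊆ B) : mrank M A ≤ mrank M B := by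
  apply Finset.sup_mono
  intro I hI
  simp only [Finset.mem_filter] at *
  exact ⟨hI.1, hI.2.1, hI.2.2.trans h⟩

lemma mrank_insert_le (A : Set (Fin n)) (x : Fin n) :
    mrank M (insert x A) ≤ mrank M A + 1 := by
  apply Finset.sup_le
  intro I hI
  simp only [Finset.mem_filter] at hI
  calc I.card ≤ (I.erase x).card + 1 := by
        have := Finset.pred_card_le_card_erase (a := x) (s := I)
        omega
    _ ≤ mrank M A + 1 := by
        have : M.Indep ↑(I.erase x) := hI.2.1.subset (by simp [Finset.erase_subset])
        refine Nat.add_le_add_right (mrank_le_of_indep this ?_) 1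
        intro y hy
        simp only [Finset.coe_erase, Set.mem_diff, Set.mem_singleton_iff] at hy
        have := hI.2.2 hy.1
        simp only [Set.mem_insert_iff] at this
        tauto

lemma mrank_le_insert (A : Set (Fin n)) (x : Fin n) :
    mrank M A ≤ mrank M (insert x A) := mrank_mono (Set.subset_insert x A)

lemma mrank_exchange {A : Set (Fin n)} {x y : Fin n}
    (h2 : mrank M (insert y (insert x A)) = mrank M A + 1)
    (h1 : mrank M (insert x A) = mrank M A) :
    mrank M (insert y A) = mrank M A + 1 := by
  set ρ := mrank M A with hρ
  by_contra hne
  have hub : mrank M (insert y A) ≤ ρ + 1 := mrank_insert_le A y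
  have hlb : ρ ≤ mrank M (insert y A) := mrank_le_insert A y
  have hy : mrank M (insert y A) = ρ := by omega
  obtain ⟨I, hIind, hIsub, hIcard⟩ := mrank_attained (M := M) A
  obtain ⟨J, hJind, hJsub, hJcard⟩ := mrank_attained (M := M) (insert y (insert x A))
  have hlt : (↑I : Set (Fin n)).encard < (↑J : Set (Fin n)).encard := by
    rw [Set.encard_coe_eq_coe_finsetCard, Set.encard_coe_eq_coe_finsetCard]
    exact_mod_cast (by omega : I.card < J.card)
  obtain ⟨e, he, hins⟩ := hIind.augment hJind hlt
  have heI : e ∉ I := by simpa using he.2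
  have hcard : (insert e I).card = ρ + 1 := by
    rw [Finset.card_insert_of_notMem heI, hIcard]
  have hins' : M.Indep ↑(insert e I) := by rw [Finset.coe_insert]; exact hins
  have heJ : e ∈ insert y (insert x A) := hJsub he.1
  rcases heJ with rfl | hexA
  · have : (↑(insert e I) : Set (Fin n)) ⊆ insert e A := by
      rw [Finset.coe_insert]
      exact Set.insert_subset_insert hIsub
    have := mrank_le_of_indep hins' this
    omega
  · have : (↑(insert e I) : Set (Fin n)) ⊆ insert x A := by
      rw [Finset.coe_insert]
      exact Set.insert_subset hexA (hIsub.trans (Set.subset_insert x A))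
    have := mrank_le_of_indep hins' this
    omega

end MrankLemmas

section Step
variable {n : ℕ} (M : Matroid (Fin n))

lemma rankSeq_length (rk : Finset (Fin n) → ℕ) (π : Equiv.Perm (Fin n)) :
    (rankSeq rk π).length = n := by simp [rankSeq]

lemma rankSeq_getElem (rk : Finset (Fin n) → ℕ) (π : Equiv.Perm (Fin n)) {j : ℕ}
    (hj : j < n) :
    (rankSeq rk π)[j]'(by simpa [rankSeq_length]) =
      decide (rk (prefFinset π (j + 1)) = rk (prefFinset π j) + 1) := by
  simp [rankSeq]

lemma step_lemma (π : Equiv.Perm (Fin n)) {p : ℕ} (hp : p + 1 < n)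
    (h0 : (rankSeq (fun A => mrank M ↑A) π)[p]'(by rw [rankSeq_length]; omega) = false)
    (h1 : (rankSeq (fun A => mrank M ↑A) π)[p+1]'(by rw [rankSeq_length]; omega) = true) :
    rankSeq (fun A => mrank M ↑A) (π * Equiv.swap (⟨p, by omega⟩ : Fin n) ⟨p+1, hp⟩)
      = swapList (rankSeq (fun A => mrank M ↑A) π) p := by
  set rk : Finset (Fin n) → ℕ := fun A => mrank M ↑A with hrk
  set a : Fin n := ⟨p, by omega⟩
  set b : Fin n := ⟨p+1, hp⟩
  set π' := π * Equiv.swap a b with hπ'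
  -- basic prefFinset facts
  have hpre : ∀ m, m ≤ p ∨ p + 2 ≤ m → prefFinset π' m = prefFinset π m := by
    intro m hm
    rw [hπ', prefFinset_mul, cutSet_swap_fix hp hm, prefFinset_eq]
  have hmid : prefFinset π' (p+1) = insert (π b) (prefFinset π p) := by
    rw [hπ', prefFinset_mul, cutSet_swap_mid hp, Finset.image_insert, prefFinset_eq]
  have hP1 : prefFinset π (p+1) = insert (π a) (prefFinset π p) :=
    prefFinset_succ π (by omega)
  have hP2 : prefFinset π (p+2) = insert (π b) (insert (π a) (prefFinset π p)) := by
    rw [prefFinset_succ π (show p+1 < n by omega), hP1]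
  -- rank values
  rw [rankSeq_getElem _ _ (by omega : p < n)] at h0
  rw [rankSeq_getElem _ _ (by omega : p + 1 < n)] at h1
  set ρ := rk (prefFinset π p) with hρ
  have hub : rk (prefFinset π (p+1)) ≤ ρ + 1 := by
    rw [hP1, hρ, hrk]
    simpa using mrank_insert_le (M := M) (↑(prefFinset π p)) (π a)
  have hlbm : ρ ≤ rk (prefFinset π (p+1)) := by
    rw [hP1, hρ, hrk]
    simpa using mrank_le_insert (M := M) (↑(prefFinset π p)) (π a)
  have hr1 : rk (prefFinset π (p+1)) = ρ := by
    simp only [decide_eq_false_iff_not] at h0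
    omega
  have hr2 : rk (prefFinset π (p+2)) = ρ + 1 := by
    simp only [decide_eq_true_eq] at h1
    rw [show p+1+1 = p+2 by omega] at h1
    omega
  have hmidrk : rk ((insert (π b) (prefFinset π p) : Finset (Fin n))) = ρ + 1 := by
    have hx : mrank M (insert (π b) (insert (π a) ↑(prefFinset π p))) = 
        mrank M ↑(prefFinset π p) + 1 := by
      have := hr2
      rw [hP2, hrk] at this
      simpa using this
    have hy : mrank M (insert (π a) ↑(prefFinset π p)) = mrank M ↑(prefFinset π p) := by
      have := hr1
      rw [hP1, hrk] at this
      simpa using this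
    have := mrank_exchange (M := M) hx hy
    rw [hrk]
    simpa using this
  -- now compare the lists entrywise
  apply List.ext_getElem (by rw [rankSeq_length, swapList_length, rankSeq_length])
  intro j hjl hjr
  have hjn : j < n := by rwa [rankSeq_length] at hjl
  rw [rankSeq_getElem _ _ hjn,
    swapList_getElem _ _ _ (by rw [rankSeq_length]; omega)]
  rcases eq_or_ne j p with heq | hj1
  · subst heq
    rw [if_pos rfl, hmid, hpre j (by omega)]
    simp only [decide_eq_true_eq]
    rw [hmidrk, hρ]
  · rcases eq_or_ne j (p+1) with heq | hj2
    · subst heq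
      rw [if_neg hj1, if_pos rfl, hpre (p+2) (by omega), hmid]
      simp only [decide_eq_false_iff_not]
      rw [hmidrk]
      show ¬ (rk (prefFinset π (p+2)) = ρ + 1 + 1)
      omega
    · rw [if_neg hj1, if_neg hj2, hpre j (by omega), hpre (j+1) (by omega),
        rankSeq_getElem _ _ hjn]

end Step


section Main
variable {n : ℕ} (M : Matroid (Fin n))

lemma dominates_iff (s u : List Bool) : Dominates s u ↔ ∀ m, pc u m ≤ pc s m :=
  Iff.rfl

lemma eq_of_measure_zero {s u : List Bool} (hsl : s.length = n) (hul : u.length = n)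
    (hc : u.count true = s.count true) (hd : Dominates s u)
    (hz : ∑ m ∈ Finset.range (n+1), (pc s m - pc u m) = 0) : u = s := by
  have hdom : ∀ m, pc u m ≤ pc s m := hd
  apply eq_of_pc_eq (by omega)
  intro m
  rcases le_or_gt m n with hm | hm
  · have := (Finset.sum_eq_zero_iff.1 hz) m (Finset.mem_range.2 (by omega))
    have := hdom m
    omega
  · rw [pc_of_ge (by omega), pc_of_ge (by omega), hc]

lemma realize_dominates (s : List Bool) (hsl : s.length = n) (d : ℕ) :
    ∀ u : List Bool, u.length = n → u.count true = s.count true →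
    Dominates s u → (∑ m ∈ Finset.range (n+1), (pc s m - pc u m)) ≤ d →
    (∃ π : Equiv.Perm (Fin n), rankSeq (fun A => mrank M ↑A) π = u) →
    ∃ π : Equiv.Perm (Fin n), rankSeq (fun A => mrank M ↑A) π = s := by
  induction d with
  | zero =>
    intro u hul hc hd hm hreal
    rw [eq_of_measure_zero hsl hul hc hd (by omega)] at hreal
    exact hreal
  | succ d ih =>
    intro u hul hc hd hm hreal
    by_cases hz : ∑ m ∈ Finset.range (n+1), (pc s m - pc u m) = 0
    · rw [eq_of_measure_zero hsl hul hc hd hz] at hreal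
      exact hreal
    · have hdom : ∀ m, pc u m ≤ pc s m := hd
      have hne : ∃ m, pc u m < pc s m := by
        by_contra hno
        push_neg at hno
        exact hz (Finset.sum_eq_zero fun m _ => by have := hno m; omega)
      obtain ⟨p, hplen, hu0, hu1, hineq⟩ := exists_swap1 (by omega) hc hd hne
      have hpn : p + 1 < n := by omega
      -- properties of the swapped list
      have hul' : (swapList u p).length = n := by rw [swapList_length]; exact hul
      have hc' : (swapList u p).count true = s.count true := by
        rw [swapList_count hplen hu0 hu1]; exact hc
      have hd' : Dominates s (swapList u p) := by
        intro m
        show pc (swapList u p) m ≤ pc s m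
        rw [swapList_pc hplen hu0 hu1]
        split_ifs with h
        · subst h; omega
        · exact hdom m
      have hkey : ∀ m ∈ Finset.range (n+1),
          (pc s m - pc u m) = (pc s m - pc (swapList u p) m)
            + (if m = p + 1 then 1 else 0) := by
        intro m _
        rw [swapList_pc hplen hu0 hu1]
        split_ifs with h
        · subst h; omega
        · omega
      have hmeas : (∑ m ∈ Finset.range (n+1), (pc s m - pc (swapList u p) m)) ≤ d := by
        have e1 : ∑ m ∈ Finset.range (n+1), (pc s m - pc u m)
            = (∑ m ∈ Finset.range (n+1), (pc s m - pc (swapList u p) m))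
              + ∑ m ∈ Finset.range (n+1), (if m = p + 1 then 1 else 0) := by
          rw [← Finset.sum_add_distrib]
          exact Finset.sum_congr rfl hkey
        have e2 : (∑ m ∈ Finset.range (n+1), (if m = p + 1 then 1 else 0)) = 1 := by
          rw [Finset.sum_ite_eq' (Finset.range (n+1)) (p+1) (fun _ => 1)]
          have : p + 1 ∈ Finset.range (n+1) := Finset.mem_range.2 (by omega)
          simp [this]
        omega
      -- realizability of the swapped list
      obtain ⟨π, hπ⟩ := hreal
      have hreal' : ∃ π : Equiv.Perm (Fin n),
          rankSeq (fun A => mrank M ↑A) π = swapList u p := by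
        subst hπ
        exact ⟨π * Equiv.swap (⟨p, by omega⟩ : Fin n) ⟨p+1, hpn⟩,
          step_lemma M π hpn (by exact hu0) (by exact hu1)⟩
      exact ih (swapList u p) hul' hc' hd' hmeas hreal'

end Main

end Aux

/-- The support of an `(n,r)`-matroid is an order filter in the dominance
order on `(n,r)`-sequences: if `g_t(M) > 0` and `s ⊵ t` then `g_s(M) > 0`. -/
theorem support_isOrderFilter (n r : ℕ) (M : Matroid (Fin n))
    (hE : M.E = Set.univ) (hr : mrank M Set.univ = r)
    (s t : List Bool) (hs : s ∈ seqs n r) (ht : t ∈ seqs n r) (hst : Dominates s t)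
    (hgt : 0 < gCoeff (fun A : Finset (Fin n) => mrank M ↑A) t) :
    0 < gCoeff (fun A : Finset (Fin n) => mrank M ↑A) s := by
  classical
  set rk : Finset (Fin n) → ℕ := fun A => mrank M ↑A with hrk
  -- extract a permutation realizing t
  rw [gCoeff, Finset.card_pos] at hgt
  obtain ⟨π, hπ⟩ := hgt
  rw [Finset.mem_filter] at hπ
  have hπt : rankSeq rk π = t := hπ.2
  -- lengths and counts
  simp only [seqs, Finset.mem_filter, Finset.mem_image, Finset.mem_univ, true_and] at hs ht
  obtain ⟨⟨f, hf⟩, hscount⟩ := hs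
  obtain ⟨⟨g, hg⟩, htcount⟩ := ht
  have hsl : s.length = n := by rw [← hf]; simp
  have htl : t.length = n := by rw [← hg]; simp
  have hcount : t.count true = s.count true := by rw [hscount, htcount]
  obtain ⟨π', hπ'⟩ := realize_dominates M s hsl
    (∑ m ∈ Finset.range (n+1), (pc s m - pc t m)) t htl hcount hst le_rfl ⟨π, hπt⟩
  rw [gCoeff, Finset.card_pos]
  exact ⟨π', Finset.mem_filter.2 ⟨Finset.mem_univ _, hπ'⟩⟩
end

section
/- Let u be a bit sequence of length λ with exactly ρ ones, and let v be a bit sequence such that u01v is an (n,r)-sequence. Then Sp([u10v]) − Sp([u01v]) = (x−1)^{r−ρ−1} (x+y−xy) (y−1)^{λ−ρ} / ((λ+1)!(n−λ−1)!) in K[x,y]. -/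
open MvPolynomial
open scoped Classical

private lemma count_take_aux (u v : List Bool) (m : ℕ) (hm : m ≠ u.length + 1) :
    ((u ++ [true, false] ++ v).take m).count true
      = ((u ++ [false, true] ++ v).take m).count true := by
  rw [List.append_assoc, List.append_assoc, List.take_append,
    List.take_append (l₁ := u), List.count_append, List.count_append]
  congr 1
  rcases Nat.lt_or_ge m (u.length + 1) with h | h
  · have h0 : m - u.length = 0 := by omega
    simp [h0]
  · obtain ⟨k, hk⟩ : ∃ k, m - u.length = k + 2 := ⟨m - u.length - 2, by omega⟩
    rw [hk]
    simp [List.cons_append, List.take_succ_cons, List.count_cons]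

/-- If `u` has length `λ` and `ρ` ones and `u01v` is an `(n,r)`-sequence,
then `Sp([u10v]) − Sp([u01v]) = (x−1)^{r−ρ−1}(x+y−xy)(y−1)^{λ−ρ}/((λ+1)!(n−λ−1)!)`. -/
theorem spMap_cornerstone (K : Type*) [Field K] (n r lam rho : ℕ) (u v : List Bool)
    (hlen : u.length = lam) (hwt : u.count true = rho)
    (hn : (u ++ [false, true] ++ v).length = n)
    (hr : (u ++ [false, true] ++ v).count true = r) :
    SpMap K (Finsupp.single (u ++ [true, false] ++ v) 1) -
        SpMap K (Finsupp.single (u ++ [false, true] ++ v) 1) =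
      (((lam + 1).factorial * (n - lam - 1).factorial : ℕ) : K)⁻¹ •
        ((X 0 - 1) ^ (r - rho - 1) * (X 0 + X 1 - X 0 * X 1) * (X 1 - 1) ^ (lam - rho)) := by
  have hL : (u ++ [true, false] ++ v).length = n := by rw [← hn]; simp
  have hC : (u ++ [true, false] ++ v).count true = r := by
    rw [← hr]; simp [List.count_append]
  have hn' : n = lam + 2 + v.length := by
    rw [← hn]; simp [List.length_append, hlen]; omega
  have hr' : r = rho + 1 + v.count true := by
    rw [← hr]; simp [List.count_append, hwt]; omega
  have hrl : rho ≤ lam := by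
    rw [← hlen, ← hwt]; exact List.count_le_length
  rw [SpMap, Finsupp.linearCombination_single, Finsupp.linearCombination_single,
    one_smul, one_smul]
  unfold spPoly
  rw [hL, hn, hC, hr, ← Finset.sum_sub_distrib]
  have hmem : lam + 1 ∈ Finset.range (n + 1) := by
    rw [Finset.mem_range]; omega
  rw [Finset.sum_eq_single_of_mem (lam + 1) hmem (fun m _ hm => by
    rw [count_take_aux u v m (by rw [hlen]; exact hm), sub_self])]
  have hul : u.length ≤ lam + 1 := by omega
  have h1 : ((u ++ [true, false] ++ v).take (lam + 1)).count true = rho + 1 := by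
    rw [List.append_assoc, List.take_append, hlen,
      List.take_of_length_le hul, Nat.add_sub_cancel_left]
    simp [List.cons_append, List.take_succ_cons, List.count_append, List.count_cons, hwt]
  have h2 : ((u ++ [false, true] ++ v).take (lam + 1)).count true = rho := by
    rw [List.append_assoc, List.take_append, hlen,
      List.take_of_length_le hul, Nat.add_sub_cancel_left]
    simp [List.cons_append, List.take_succ_cons, List.count_append, List.count_cons, hwt]
  rw [h1, h2]
  obtain ⟨a, ha⟩ : ∃ a, a = r - rho - 1 := ⟨_, rfl⟩
  obtain ⟨b, hb⟩ : ∃ b, b = lam - rho := ⟨_, rfl⟩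
  have e1 : r - (rho + 1) = a := by omega
  have e2 : lam + 1 - (rho + 1) = b := by omega
  have e3 : r - rho = a + 1 := by omega
  have e4 : lam + 1 - rho = b + 1 := by omega
  have e5 : n - (lam + 1) = n - lam - 1 := by omega
  rw [← ha, ← hb, e1, e2, e3, e4, e5, ← smul_sub, pow_succ, pow_succ]
  congr 1
  ring
end

section
/- For every (n,r)-sequence s, the collection {B ⊆ {1,…,n} : |B| = r and the indicator sequence of B is dominated by s} is the collection of bases of a matroid of rank r on {1,2,…,n} (this matroid is the freedom matroid F(s)). -/
open MvPolynomial
open scoped Classical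

noncomputable def cnt {n : ℕ} (B : Finset (Fin n)) (j : ℕ) : ℕ :=
  (B.filter fun i => i.val < j).card

lemma count_eq_sum (L : List Bool) :
    L.count true = (L.map fun b => if b then (1:ℕ) else 0).sum := by
  induction L with
  | nil => simp
  | cons b t ih => cases b <;> simp [ih, List.count_cons, Nat.add_comm]

lemma indCount {n : ℕ} (B : Finset (Fin n)) (j : ℕ) :
    ((indList B).take j).count true = cnt B j := by
  rw [count_eq_sum, List.map_take, indList, List.map_ofFn, List.sum_take_ofFn]
  rw [cnt, Finset.card_filter, Finset.sum_filter]
  conv_rhs => rw [← Finset.filter_univ_mem B, Finset.sum_filter]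
  apply Finset.sum_congr rfl
  intro i _
  by_cases h : i ∈ B <;> by_cases h2 : i.val < j <;> simp [h, h2]

lemma dom_iff {n : ℕ} (s : List Bool) (B : Finset (Fin n)) :
    Dominates s (indList B) ↔ ∀ j, cnt B j ≤ (s.take j).count true := by
  unfold Dominates
  exact forall_congr' fun j => by rw [indCount]

lemma cnt_mono {n : ℕ} {B C : Finset (Fin n)} (h : B ⊆ C) (j : ℕ) :
    cnt B j ≤ cnt C j :=
  Finset.card_le_card (Finset.filter_subset_filter _ h)

lemma cnt_insert {n : ℕ} {C : Finset (Fin n)} {f : Fin n} (hf : f ∉ C) (j : ℕ) :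
    cnt (insert f C) j = cnt C j + if f.val < j then 1 else 0 := by
  unfold cnt
  rw [Finset.filter_insert]
  split
  · rw [Finset.card_insert_of_notMem (fun h => hf (Finset.mem_of_mem_filter _ h))]
  · simp

lemma cnt_erase {n : ℕ} {B : Finset (Fin n)} {a : Fin n} (ha : a ∈ B) (haj : a.val < j) :
    cnt B j = cnt (B.erase a) j + 1 := by
  unfold cnt
  rw [Finset.filter_erase, Finset.card_erase_of_mem (Finset.mem_filter.mpr ⟨ha, haj⟩)]
  have : 0 < (B.filter fun i => i.val < j).card :=
    Finset.card_pos.mpr ⟨a, Finset.mem_filter.mpr ⟨ha, haj⟩⟩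
  omega

lemma cnt_erase_of_ge {n : ℕ} {B : Finset (Fin n)} {a : Fin n} (haj : ¬ a.val < j) :
    cnt (B.erase a) j = cnt B j := by
  unfold cnt
  rw [Finset.filter_erase, Finset.erase_eq_of_notMem]
  simp [haj]

lemma cnt_add_compl {n : ℕ} (B : Finset (Fin n)) (j : ℕ) :
    cnt B j + (B.filter fun i => ¬ i.val < j).card = B.card :=
  Finset.card_filter_add_card_filter_not _

lemma cnt_top {n : ℕ} (B : Finset (Fin n)) : cnt B n = B.card := by
  unfold cnt
  rw [Finset.filter_true_of_mem fun i _ => i.isLt]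

/-- For every `(n,r)`-sequence `s`, the sets `B ⊆ {1,…,n}` with `|B| = r`
whose indicator sequence is dominated by `s` are the bases of a rank-`r` matroid on
`{1,…,n}` (the freedom matroid `F(s)`). -/
theorem exists_freedomMatroid (n r : ℕ) (s : List Bool) (hs : s ∈ seqs n r) :
    ∃ M : Matroid (Fin n), M.E = Set.univ ∧ mrank M Set.univ = r ∧
      ∀ B : Finset (Fin n), (M.IsBase ↑B ↔ B.card = r ∧ Dominates s (indList B)) := by
  classical
  rw [seqs, Finset.mem_filter, Finset.mem_image] at hs
  obtain ⟨⟨f, -, hf⟩, hcount⟩ := hs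
  have hlen : s.length = n := by rw [← hf, List.length_ofFn]
  -- the base predicate
  set P : Set (Fin n) → Prop := fun X => ∃ B : Finset (Fin n),
    ↑B = X ∧ B.card = r ∧ Dominates s (indList B) with hP
  -- the canonical basis
  set B0 : Finset (Fin n) := Finset.univ.filter fun i => f i = true with hB0
  have hind0 : indList B0 = s := by
    rw [← hf, indList]
    congr 1
    funext i
    simp [hB0]
  have hcard0 : B0.card = r := by
    have h1 := indCount B0 n
    have ht : s.take n = s := by rw [← hlen, List.take_length]
    rw [hind0, ht, hcount, cnt_top] at h1
    omega
  have hdom0 : Dominates s (indList B0) := by rw [hind0]; exact fun j => le_refl _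
  have hP0 : P ↑B0 := ⟨B0, rfl, hcard0, hdom0⟩
  -- dominance bound from s
  have hsle : ∀ j, (s.take j).count true ≤ r := by
    intro j
    rw [← hcount]
    exact (List.take_sublist _ _).count_le _
  -- exchange property
  have hex : Matroid.ExchangeProperty P := by
    rintro X Y ⟨B1, rfl, hB1c, hB1d⟩ ⟨B2, rfl, hB2c, hB2d⟩ a ha
    rw [dom_iff] at hB1d hB2d
    obtain ⟨ha1, ha2⟩ := ha
    have haB1 : a ∈ B1 := by exact_mod_cast ha1
    have haB2 : a ∉ B2 := by simpa using ha2
    have hr1 : 1 ≤ r := hB1c ▸ Finset.card_pos.mpr ⟨a, haB1⟩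
    -- common facts about the swapped set
    have key : ∀ g : Fin n, g ∈ B2 → g ∉ B1 →
        (∀ j, cnt (insert g (B1.erase a)) j ≤ (s.take j).count true) →
        ∃ b ∈ (↑B2 : Set (Fin n)) \ ↑B1, P (insert b ((↑B1 : Set (Fin n)) \ {a})) := by
      intro g hg2 hg1 hdom
      refine ⟨g, ⟨by exact_mod_cast hg2, by exact_mod_cast hg1⟩,
        insert g (B1.erase a), ?_, ?_, (dom_iff _ _).mpr hdom⟩
      · push_cast
        rfl
      · rw [Finset.card_insert_of_notMem (fun h => hg1 (Finset.mem_of_mem_erase h)),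
          Finset.card_erase_of_mem haB1, hB1c]
        omega
    by_cases hcase : ∃ g ∈ B2, g ∉ B1 ∧ a.val < g.val
    · obtain ⟨g, hg2, hg1, hag⟩ := hcase
      apply key g hg2 hg1
      intro j
      have hgB1e : g ∉ B1.erase a := fun h => hg1 (Finset.mem_of_mem_erase h)
      rw [cnt_insert hgB1e]
      by_cases hgj : g.val < j
      · have haj : a.val < j := lt_trans hag hgj
        rw [if_pos hgj, ← cnt_erase haB1 haj]
        exact hB1d j
      · rw [if_neg hgj]
        simp only [Nat.add_zero]
        exact le_trans (cnt_mono (Finset.erase_subset _ _) j) (hB1d j)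
    · push_neg at hcase
      -- all elements of B2 \ B1 are below a
      have hbelow : ∀ g ∈ B2 \ B1, g.val < a.val := by
        intro g hg
        rw [Finset.mem_sdiff] at hg
        have hle := hcase g hg.1 hg.2
        have hne : g ≠ a := fun h => haB2 (h ▸ hg.1)
        have : g.val ≠ a.val := fun h => hne (Fin.ext h)
        omega
      have hne : (B2 \ B1).Nonempty := by
        rw [← Finset.card_pos, Finset.card_sdiff_comm (hB2c.trans hB1c.symm),
          Finset.card_pos]
        exact ⟨a, Finset.mem_sdiff.mpr ⟨haB1, haB2⟩⟩
      set g := (B2 \ B1).max' hne with hgdef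
      have hgmem := (B2 \ B1).max'_mem hne
      have hg2 : g ∈ B2 := (Finset.mem_sdiff.mp hgmem).1
      have hg1 : g ∉ B1 := (Finset.mem_sdiff.mp hgmem).2
      have hga : g.val < a.val := hbelow g hgmem
      apply key g hg2 hg1
      intro j
      have hgB1e : g ∉ B1.erase a := fun h => hg1 (Finset.mem_of_mem_erase h)
      rw [cnt_insert hgB1e]
      by_cases hgj : g.val < j
      · by_cases haj : a.val < j
        · rw [if_pos hgj, ← cnt_erase haB1 haj]
          exact hB1d j
        · -- the interesting case: g.val < j ≤ a.val
          rw [if_pos hgj, cnt_erase_of_ge haj]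
          -- show cnt B1 j + 1 ≤ cnt B2 j
          have hsub : (B2.filter fun i => ¬ i.val < j) ⊆ (B1.filter fun i => ¬ i.val < j) := by
            intro x hx
            rw [Finset.mem_filter] at hx ⊢
            refine ⟨?_, hx.2⟩
            by_contra hx1
            have hxle : x ≤ g := Finset.le_max' _ x (Finset.mem_sdiff.mpr ⟨hx.1, hx1⟩)
            have : x.val < j := lt_of_le_of_lt hxle hgj
            exact hx.2 this
          have hamem : a ∈ (B1.filter fun i => ¬ i.val < j) :=
            Finset.mem_filter.mpr ⟨haB1, haj⟩
          have hanot : a ∉ (B2.filter fun i => ¬ i.val < j) :=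
            fun h => haB2 (Finset.mem_of_mem_filter _ h)
          have hlt : (B2.filter fun i => ¬ i.val < j).card <
              (B1.filter fun i => ¬ i.val < j).card :=
            Finset.card_lt_card (Finset.ssubset_iff_of_subset hsub |>.mpr ⟨a, hamem, hanot⟩)
          have e1 := cnt_add_compl B1 j
          have e2 := cnt_add_compl B2 j
          have := hB2d j
          rw [hB1c] at e1
          rw [hB2c] at e2
          omega
      · rw [if_neg hgj]
        simp only [Nat.add_zero]
        exact le_trans (cnt_mono (Finset.erase_subset _ _) j) (hB1d j)
  -- build the matroid
  refine ⟨Matroid.ofIsBaseOfFinite Set.finite_univ P ⟨↑B0, hP0⟩ hex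
    (fun B _ => Set.subset_univ _), rfl, ?_, ?_⟩
  · -- rank computation
    set M := Matroid.ofIsBaseOfFinite Set.finite_univ P ⟨↑B0, hP0⟩ hex
      (fun B _ => Set.subset_univ _) with hM
    have hbase : ∀ X, M.IsBase X ↔ P X := fun X => Iff.rfl
    apply le_antisymm
    · apply Finset.sup_le
      intro I hI
      rw [Finset.mem_filter] at hI
      obtain ⟨Bse, hBse, hIB⟩ := hI.2.1.exists_isBase_superset
      obtain ⟨B', hB'eq, hB'c, -⟩ := (hbase Bse).mp hBse
      rw [← hB'eq] at hIB
      rw [← hB'c]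
      exact Finset.card_le_card (by exact_mod_cast hIB)
    · have hIndep : M.Indep ↑B0 := ((hbase ↑B0).mpr hP0).indep
      calc r = B0.card := hcard0.symm
        _ ≤ _ := Finset.le_sup (Finset.mem_filter.mpr
            ⟨Finset.mem_univ _, hIndep, Set.subset_univ _⟩)
  · -- base characterization
    intro B
    constructor
    · rintro ⟨B', hB'eq, hB'c, hB'd⟩
      have : B' = B := Finset.coe_injective hB'eq
      subst this
      exact ⟨hB'c, hB'd⟩
    · rintro ⟨h1, h2⟩
      exact ⟨B, rfl, h1, h2⟩
end

section
/- Let s be an (n,r)-sequence and F(s) the freedom matroid. Then: (a) for every (n,r)-sequence u, if g_u(F(s)) ≠ 0 then u ⊵ s; and (b) g_s(F(s)) ≠ 0. -/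
open MvPolynomial
open scoped Classical

/-! ### Auxiliary lemmas -/

lemma count_take_ofFn {n : ℕ} (g : Fin n → Bool) (j : ℕ) :
    ((List.ofFn g).take j).count true
      = (Finset.univ.filter fun i : Fin n => (i:ℕ) < j ∧ g i = true).card := by
  induction j with
  | zero => simp
  | succ j ih =>
    rw [List.take_succ, List.count_append, ih, List.getElem?_ofFn]
    by_cases hj : j < n
    · have hsplit : (Finset.univ.filter fun i : Fin n => (i:ℕ) < j+1 ∧ g i = true)
          = (Finset.univ.filter fun i : Fin n => (i:ℕ) < j ∧ g i = true)
            ∪ (Finset.univ.filter fun i : Fin n => (i:ℕ) = j ∧ g i = true) := by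
        ext i
        simp only [Finset.mem_filter, Finset.mem_union, Finset.mem_univ, true_and,
          Nat.lt_succ_iff_lt_or_eq]
        tauto
      rw [hsplit, Finset.card_union_of_disjoint]
      · congr 1
        · simp [List.ofFnNthVal, hj]
          by_cases hg : g ⟨j, hj⟩ = true
          · have : (Finset.univ.filter fun i : Fin n => (i:ℕ) = j ∧ g i = true)
                = {⟨j, hj⟩} := by
              ext i
              simp only [Finset.mem_filter, Finset.mem_univ, true_and, Finset.mem_singleton]
              constructor
              · rintro ⟨h1, _⟩; exact Fin.ext h1
              · rintro rfl; exact ⟨rfl, hg⟩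
            rw [this, hg]
            simp
          · have : (Finset.univ.filter fun i : Fin n => (i:ℕ) = j ∧ g i = true)
                = ∅ := by
              ext i
              simp only [Finset.mem_filter, Finset.mem_univ, true_and,
                Finset.notMem_empty, iff_false, not_and]
              rintro h1; rw [show i = ⟨j, hj⟩ from Fin.ext h1]; simpa using hg
            rw [this]
            simp [Bool.eq_false_iff.mp (Bool.not_eq_true _ |>.mp hg)]
      · refine Finset.disjoint_left.mpr ?_
        intro i hi hi2
        simp only [Finset.mem_filter] at hi hi2
        omega
    · have : List.ofFnNthVal g j = none := by simp [List.ofFnNthVal, hj]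
      rw [dif_neg hj]
      simp only [Option.toList_none, List.count_nil, Nat.add_zero]
      apply congrArg
      apply Finset.filter_congr
      intro i _
      have : (i:ℕ) < j := lt_of_lt_of_le i.isLt (le_of_not_gt hj)
      simp [this, Nat.lt_succ_of_lt this]

namespace Freedom

/-- prefix count of a finset -/
noncomputable def cnt {n : ℕ} (A : Finset (Fin n)) (j : ℕ) : ℕ :=
  (A.filter fun i => i.val < j).card

/-- prefix count of ones of s -/
def sig (s : List Bool) (j : ℕ) : ℕ := (s.take j).count true

lemma cnt_zero {n : ℕ} (A : Finset (Fin n)) : cnt A 0 = 0 := by simp [cnt]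

lemma cnt_of_le {n : ℕ} (A : Finset (Fin n)) {j : ℕ} (h : n ≤ j) : cnt A j = A.card := by
  unfold cnt
  rw [Finset.filter_true_of_mem]
  intro i _
  exact lt_of_lt_of_le i.isLt h

lemma cnt_le_card {n : ℕ} (A : Finset (Fin n)) (j : ℕ) : cnt A j ≤ A.card :=
  Finset.card_le_card (Finset.filter_subset _ _)

lemma cnt_mono_set {n : ℕ} {A B : Finset (Fin n)} (h : A ⊆ B) (j : ℕ) :
    cnt A j ≤ cnt B j :=
  Finset.card_le_card (Finset.filter_subset_filter _ h)

lemma cnt_insert {n : ℕ} {A : Finset (Fin n)} {p : Fin n} (hp : p ∉ A) (j : ℕ) :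
    cnt (insert p A) j = cnt A j + if (p:ℕ) < j then 1 else 0 := by
  unfold cnt
  rw [Finset.filter_insert]
  split_ifs with h
  · rw [Finset.card_insert_of_notMem (fun hc => hp (Finset.mem_of_mem_filter _ hc))]
  · simp

lemma cnt_le {n : ℕ} (A : Finset (Fin n)) (j : ℕ) : cnt A j ≤ j := by
  unfold cnt
  calc (A.filter fun i => i.val < j).card
      = ((A.filter fun i => i.val < j).image Fin.val).card := by
        rw [Finset.card_image_of_injective _ Fin.val_injective]
    _ ≤ (Finset.range j).card := by
        apply Finset.card_le_card
        intro m hm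
        simp only [Finset.mem_image, Finset.mem_filter] at hm
        obtain ⟨i, ⟨_, hi⟩, rfl⟩ := hm
        exact Finset.mem_range.mpr hi
    _ = j := Finset.card_range j

lemma cnt_univ (n : ℕ) {j : ℕ} (h : j ≤ n) : cnt (Finset.univ : Finset (Fin n)) j = j := by
  unfold cnt
  have : (Finset.univ : Finset (Fin n)).filter (fun i => i.val < j)
      = (Finset.univ : Finset (Fin j)).map ⟨Fin.castLE h, Fin.castLE_injective h⟩ := by
    ext i
    simp only [Finset.mem_filter, Finset.mem_univ, true_and, Finset.mem_map,
      Function.Embedding.coeFn_mk]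
    constructor
    · intro hi
      exact ⟨⟨i.val, hi⟩, by ext; rfl⟩
    · rintro ⟨k, rfl⟩
      exact k.isLt
  rw [this, Finset.card_map, Finset.card_univ, Fintype.card_fin]

lemma sig_zero (s : List Bool) : sig s 0 = 0 := by simp [sig]

lemma sig_mono (s : List Bool) {j k : ℕ} (h : j ≤ k) : sig s j ≤ sig s k := by
  unfold sig
  have h1 : s.take j = (s.take k).take j := by rw [List.take_take, min_eq_left h]
  rw [h1]
  exact ((s.take k).take_sublist j).count_le true

lemma sig_le_count (s : List Bool) (j : ℕ) : sig s j ≤ s.count true := by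
  unfold sig
  exact (s.take_sublist j).count_le true

lemma sig_of_le (s : List Bool) {j : ℕ} (h : s.length ≤ j) : sig s j = s.count true := by
  unfold sig
  rw [List.take_of_length_le h]

lemma sig_sub_le (s : List Bool) {j k : ℕ} (h : j ≤ k) : sig s k ≤ sig s j + (k - j) := by
  unfold sig
  have h1 : s.take k = s.take j ++ ((s.drop j).take (k - j)) := by
    rw [← List.take_add]
    congr 1
    omega
  rw [h1, List.count_append]
  have h2 : ((s.drop j).take (k-j)).count true ≤ k - j :=
    le_trans List.count_le_length (le_trans (List.length_take_le _ _) le_rfl)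
  omega

lemma sig_succ (s : List Bool) {j : ℕ} (h : j < s.length) :
    sig s (j + 1) = sig s j + (if s.get ⟨j, h⟩ then 1 else 0) := by
  unfold sig
  rw [List.take_succ, List.count_append]
  have : s[j]? = some (s.get ⟨j, h⟩) := by
    rw [List.getElem?_eq_getElem h]
    rfl
  rw [this]
  cases hg : s.get ⟨j, h⟩ <;> simp [hg]

lemma count_take_indList {n : ℕ} (A : Finset (Fin n)) (j : ℕ) :
    ((indList A).take j).count true = cnt A j := by
  rw [indList, count_take_ofFn]
  unfold cnt
  apply congrArg
  ext i
  simp [and_comm]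

lemma dominates_indList_iff (s : List Bool) (A : Finset (Fin s.length)) :
    Dominates s (indList A) ↔ ∀ j, cnt A j ≤ sig s j := by
  unfold Dominates sig
  constructor
  · intro h j; rw [← count_take_indList]; exact h j
  · intro h j; rw [count_take_indList]; exact h j

end Freedom

namespace Freedom

/-- Any finset `A` contains a "partial independent set" of size `sig s A.card`. -/
lemma exists_sub (s : List Bool) (A : Finset (Fin s.length)) :
    ∃ I, I ⊆ A ∧ I.card = sig s A.card ∧ ∀ j, cnt I j ≤ sig s j := by
  induction A using Finset.strongInductionOn with
  | _ A ih =>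
  rcases A.eq_empty_or_nonempty with rfl | hA
  · exact ⟨∅, Finset.Subset.refl _, by simp [sig_zero], fun j => by simp [cnt]⟩
  · set a := A.max' hA with ha
    have haA : a ∈ A := A.max'_mem hA
    set A' := A.erase a with hA'
    have hssub : A' ⊂ A := Finset.erase_ssubset haA
    have hcard : A.card = A'.card + 1 := by
      rw [hA', Finset.card_erase_of_mem haA]
      have := Finset.card_pos.mpr hA
      omega
    obtain ⟨I', hI'A, hI'card, hI'cnt⟩ := ih A' hssub
    have hstep : sig s A.card ≤ sig s A'.card + 1 := by
      have := sig_sub_le s (show A'.card ≤ A.card by omega)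
      omega
    by_cases hσ : sig s A.card = sig s A'.card
    · exact ⟨I', hI'A.trans (Finset.erase_subset _ _), by rw [hσ, hI'card], hI'cnt⟩
    · have hmono := sig_mono s (show A'.card ≤ A.card by omega)
      have hσ1 : sig s A.card = sig s A'.card + 1 := by omega
      have haI' : a ∉ I' := fun h => (Finset.notMem_erase a A) (hI'A h)
      refine ⟨insert a I', ?_, ?_, ?_⟩
      · intro x hx
        rcases Finset.mem_insert.mp hx with rfl | hx
        · exact haA
        · exact (Finset.erase_subset _ _) (hI'A hx)
      · rw [Finset.card_insert_of_notMem haI', hI'card, hσ1]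
      · intro j
        rw [cnt_insert haI']
        split_ifs with hpj
        · -- a.val < j; need cnt I' j + 1 ≤ sig s j
          have hAle : A.card ≤ a.val + 1 := by
            have h1 : cnt A (a.val + 1) = A.card := by
              unfold cnt
              rw [Finset.filter_true_of_mem]
              intro i hi
              exact Nat.lt_succ_of_le (A.le_max' i hi)
            have := cnt_le A (a.val + 1)
            omega
          have hjA : A.card ≤ j := by omega
          have : sig s A.card ≤ sig s j := sig_mono s hjA
          have h2 : cnt I' j ≤ I'.card := cnt_le_card _ _
          omega
        · have := hI'cnt j; omega

/-- If `I` is partial independent and not yet of full size, it can be extended. -/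
lemma exists_insert (s : List Bool) (I : Finset (Fin s.length))
    (hcard : I.card < s.count true) (hI : ∀ j, cnt I j ≤ sig s j) :
    ∃ p, p ∉ I ∧ ∀ j, cnt (insert p I) j ≤ sig s j := by
  have h0S : (0:ℕ) ∈ (Finset.range (s.length+1)).filter (fun j => cnt I j = sig s j) := by
    simp [cnt_zero, sig_zero]
  have hSne : ((Finset.range (s.length+1)).filter
      (fun j => cnt I j = sig s j)).Nonempty := ⟨0, h0S⟩
  obtain ⟨j0, hj0def⟩ : ∃ j0, ((Finset.range (s.length+1)).filter
      (fun j => cnt I j = sig s j)).max' hSne = j0 := ⟨_, rfl⟩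
  have hj0mem := Finset.max'_mem _ hSne
  rw [hj0def, Finset.mem_filter, Finset.mem_range] at hj0mem
  obtain ⟨hj0n, hj0eq⟩ := hj0mem
  have hj0n' : j0 ≤ s.length := by omega
  have hlt : ∀ j, j0 < j → j ≤ s.length → cnt I j < sig s j := by
    intro j h1 h2
    refine lt_of_le_of_ne (hI j) (fun heq => ?_)
    have hjS : j ∈ (Finset.range (s.length+1)).filter (fun j => cnt I j = sig s j) := by
      rw [Finset.mem_filter, Finset.mem_range]
      exact ⟨by omega, heq⟩
    have := hj0def ▸ Finset.le_max' _ j hjS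
    omega
  -- find p
  have hUcard : ((Finset.univ : Finset (Fin s.length)).filter
      (fun i => ¬ i.val < j0)).card + j0 = s.length := by
    have h1 := Finset.card_filter_add_card_filter_not
      (s := (Finset.univ : Finset (Fin s.length))) (p := fun i => i.val < j0)
    have h3 : cnt (Finset.univ : Finset (Fin s.length)) j0 = j0 := cnt_univ _ hj0n'
    have h4 : cnt (Finset.univ : Finset (Fin s.length)) j0
        = (Finset.univ.filter (fun i : Fin s.length => i.val < j0)).card := rfl
    have h5 : (Finset.univ : Finset (Fin s.length)).card = s.length := by simp
    omega
  have hIU : (I.filter fun i => ¬ i.val < j0).card + cnt I j0 = I.card := by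
    have h1 := Finset.card_filter_add_card_filter_not
      (s := I) (p := fun i => i.val < j0)
    have h4 : cnt I j0 = (I.filter (fun i => i.val < j0)).card := rfl
    omega
  have hsign : sig s s.length = s.count true := sig_of_le s le_rfl
  have hsub : sig s s.length ≤ sig s j0 + (s.length - j0) := sig_sub_le s hj0n'
  have hcnt0 : cnt I j0 ≤ I.card := cnt_le_card _ _
  have hkey : (I.filter fun i => ¬ i.val < j0).card
      < ((Finset.univ : Finset (Fin s.length)).filter (fun i => ¬ i.val < j0)).card := by
    omega
  have hex := Finset.not_subset.mp (fun hsub' => absurd (Finset.card_le_card hsub')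
    (not_le.mpr hkey))
  obtain ⟨p, hpU, hpIf⟩ := hex
  have hpI : p ∉ I := fun h => hpIf (Finset.mem_filter.mpr
    ⟨h, (Finset.mem_filter.mp hpU).2⟩)
  rw [Finset.mem_filter] at hpU
  refine ⟨p, hpI, fun j => ?_⟩
  rw [cnt_insert hpI]
  split_ifs with hpj
  · have hj0j : j0 < j := lt_of_le_of_lt (not_lt.mp hpU.2) hpj
    by_cases hjn : j ≤ s.length
    · exact hlt j hj0j hjn
    · have h1 : cnt I j = I.card := cnt_of_le I (by omega)
      have h2 : sig s j = s.count true := sig_of_le s (by omega)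
      omega
  · have := hI j; omega

end Freedom

namespace Freedom

lemma exists_basis_superset (s : List Bool) :
    ∀ (k : ℕ) (I : Finset (Fin s.length)), I.card + k = s.count true →
      (∀ j, cnt I j ≤ sig s j) → ∃ B, IsFreedomBasis s B ∧ I ⊆ B := by
  intro k
  induction k with
  | zero =>
    intro I hIcard hIcnt
    refine ⟨I, ⟨by omega, ?_⟩, Finset.Subset.refl I⟩
    exact (dominates_indList_iff s I).mpr hIcnt
  | succ k ih =>
    intro I hIcard hIcnt
    obtain ⟨p, hpI, hcnt⟩ := exists_insert s I (by omega) hIcnt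
    obtain ⟨B, hB, hsub⟩ := ih (insert p I)
      (by rw [Finset.card_insert_of_notMem hpI]; omega) hcnt
    exact ⟨B, hB, (Finset.subset_insert p I).trans hsub⟩

lemma rk_le (s : List Bool) (A : Finset (Fin s.length)) {m : ℕ}
    (h : ∀ B, IsFreedomBasis s B → (A ∩ B).card ≤ m) : freedomRk s A ≤ m := by
  unfold freedomRk
  apply Finset.sup_le
  intro B hB
  exact h B (Finset.mem_filter.mp hB).2

lemma le_rk (s : List Bool) (A B : Finset (Fin s.length)) (hB : IsFreedomBasis s B) :
    (A ∩ B).card ≤ freedomRk s A := by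
  unfold freedomRk
  exact Finset.le_sup (f := fun B => (A ∩ B).card)
    (Finset.mem_filter.mpr ⟨Finset.mem_univ B, hB⟩)

lemma rk_empty (s : List Bool) : freedomRk s ∅ = 0 :=
  Nat.le_zero.mp (rk_le s ∅ (fun B _ => by simp))

lemma rk_mono (s : List Bool) {A A' : Finset (Fin s.length)} (h : A ⊆ A') :
    freedomRk s A ≤ freedomRk s A' := by
  apply rk_le
  intro B hB
  exact le_trans (Finset.card_le_card (Finset.inter_subset_inter h (Finset.Subset.refl B)))
    (le_rk s A' B hB)

lemma rk_insert_le (s : List Bool) (A : Finset (Fin s.length)) (x : Fin s.length) :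
    freedomRk s (insert x A) ≤ freedomRk s A + 1 := by
  apply rk_le
  intro B hB
  calc (insert x A ∩ B).card ≤ (insert x (A ∩ B)).card :=
        Finset.card_le_card (by
          intro y hy
          rw [Finset.mem_inter, Finset.mem_insert] at hy
          rcases hy.1 with rfl | h
          · exact Finset.mem_insert_self _ _
          · exact Finset.mem_insert_of_mem (Finset.mem_inter.mpr ⟨h, hy.2⟩))
    _ ≤ (A ∩ B).card + 1 := Finset.card_insert_le _ _
    _ ≤ freedomRk s A + 1 := by
        have := le_rk s A B hB
        omega

/-- Lower bound on the rank. -/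
lemma sig_card_le_rk (s : List Bool) (A : Finset (Fin s.length)) :
    sig s A.card ≤ freedomRk s A := by
  obtain ⟨I, hIA, hIcard, hIcnt⟩ := exists_sub s A
  have hIr : I.card ≤ s.count true := hIcard ▸ sig_le_count s A.card
  obtain ⟨B, hB, hIB⟩ := exists_basis_superset s (s.count true - I.card) I (by omega) hIcnt
  have : I ⊆ A ∩ B := Finset.subset_inter hIA hIB
  calc sig s A.card = I.card := hIcard.symm
    _ ≤ (A ∩ B).card := Finset.card_le_card this
    _ ≤ freedomRk s A := le_rk s A B hB

/-- Upper bound on the rank of an initial segment. -/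
lemma rk_initial_le (s : List Bool) (m : ℕ) :
    freedomRk s (Finset.univ.filter fun i : Fin s.length => (i:ℕ) < m) ≤ sig s m := by
  apply rk_le
  intro B hB
  have h1 : (Finset.univ.filter fun i : Fin s.length => (i:ℕ) < m) ∩ B
      = B.filter fun i => i.val < m := by
    ext i
    simp only [Finset.mem_inter, Finset.mem_filter, Finset.mem_univ, true_and]
    tauto
  rw [h1]
  have h2 : (B.filter fun i => i.val < m).card = cnt B m := rfl
  rw [h2]
  exact (dominates_indList_iff s B).mp hB.2 m

end Freedom

namespace Freedom

lemma pref_zero {n : ℕ} (π : Equiv.Perm (Fin n)) : prefFinset π 0 = ∅ := by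
  simp [prefFinset]

lemma pref_mono {n : ℕ} (π : Equiv.Perm (Fin n)) (m : ℕ) :
    prefFinset π m ⊆ prefFinset π (m+1) := by
  intro x hx
  simp only [prefFinset, Finset.mem_image, Finset.mem_filter, Finset.mem_univ,
    true_and] at hx ⊢
  obtain ⟨i, hi, rfl⟩ := hx
  exact ⟨i, by omega, rfl⟩

lemma pref_card {n : ℕ} (π : Equiv.Perm (Fin n)) {m : ℕ} (hm : m ≤ n) :
    (prefFinset π m).card = m := by
  rw [prefFinset, Finset.card_image_of_injective _ π.injective]
  exact cnt_univ n hm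

lemma pref_succ {n : ℕ} (π : Equiv.Perm (Fin n)) {m : ℕ} (hm : m < n) :
    prefFinset π (m+1) = insert (π ⟨m, hm⟩) (prefFinset π m) := by
  rw [prefFinset, prefFinset, ← Finset.image_insert]
  congr 1
  ext i
  simp only [Finset.mem_filter, Finset.mem_univ, true_and, Finset.mem_insert]
  constructor
  · intro h
    rcases Nat.lt_succ_iff_lt_or_eq.mp h with h | h
    · exact Or.inr h
    · exact Or.inl (Fin.ext h)
  · rintro (rfl | h)
    · exact Nat.lt_succ_self m
    · omega

lemma rankSeq_get (s : List Bool) (π : Equiv.Perm (Fin s.length)) {j : ℕ}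
    (hj : j < (rankSeq (freedomRk s) π).length) :
    (rankSeq (freedomRk s) π).get ⟨j, hj⟩
      = decide (freedomRk s (prefFinset π (j+1)) = freedomRk s (prefFinset π j) + 1) := by
  have hjn : j < s.length := by simpa [rankSeq] using hj
  simp [rankSeq, List.get_ofFn]

lemma rankSeq_length (s : List Bool) (π : Equiv.Perm (Fin s.length)) :
    (rankSeq (freedomRk s) π).length = s.length := by simp [rankSeq]

lemma rk_pref_le_count (s : List Bool) (π : Equiv.Perm (Fin s.length)) :
    ∀ j, j ≤ s.length →
      freedomRk s (prefFinset π j) ≤ sig (rankSeq (freedomRk s) π) j := by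
  intro j
  induction j with
  | zero =>
    intro _
    rw [pref_zero, rk_empty, sig_zero]
  | succ j ih =>
    intro hj1
    have hj : j < s.length := hj1
    have hjlen : j < (rankSeq (freedomRk s) π).length := by rwa [rankSeq_length]
    have hcount := sig_succ (rankSeq (freedomRk s) π) hjlen
    rw [rankSeq_get s π hjlen] at hcount
    simp only [decide_eq_true_eq] at hcount
    have hmono : freedomRk s (prefFinset π j) ≤ freedomRk s (prefFinset π (j+1)) :=
      rk_mono s (pref_mono π j)
    have hins : freedomRk s (prefFinset π (j+1)) ≤ freedomRk s (prefFinset π j) + 1 := by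
      rw [pref_succ π hj]
      exact rk_insert_le s _ _
    have hihj := ih (le_of_lt hj)
    by_cases hcase : freedomRk s (prefFinset π (j+1)) = freedomRk s (prefFinset π j) + 1
    · rw [if_pos hcase] at hcount
      omega
    · rw [if_neg hcase] at hcount
      omega

theorem freedom_a (s : List Bool) (u : List Bool) (hu : u.length = s.length)
    (hcount : u.count true = s.count true)
    (hg : gCoeff (freedomRk s) u ≠ 0) : Dominates u s := by
  obtain ⟨π, hπ⟩ := Finset.card_ne_zero.mp hg
  rw [Finset.mem_filter] at hπ
  have hπu : rankSeq (freedomRk s) π = u := hπ.2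
  intro j
  by_cases hjn : j ≤ s.length
  · have hc : (prefFinset π j).card = j := pref_card π hjn
    have h1 : sig s j ≤ freedomRk s (prefFinset π j) := by
      have := sig_card_le_rk s (prefFinset π j)
      rwa [hc] at this
    have h2 := rk_pref_le_count s π j hjn
    rw [hπu] at h2
    exact le_trans h1 h2
  · push_neg at hjn
    have h1 : s.take j = s := List.take_of_length_le (by omega)
    have h2 : u.take j = u := List.take_of_length_le (by omega)
    rw [h1, h2, hcount]

theorem freedom_b (s : List Bool) : gCoeff (freedomRk s) s ≠ 0 := by
  have hrk : ∀ m : ℕ, m ≤ s.length →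
      freedomRk s (prefFinset (1 : Equiv.Perm (Fin s.length)) m) = sig s m := by
    intro m hm
    have hpref : prefFinset (1 : Equiv.Perm (Fin s.length)) m
        = Finset.univ.filter fun i : Fin s.length => (i:ℕ) < m := by
      rw [prefFinset]
      simp
    apply le_antisymm
    · rw [hpref]; exact rk_initial_le s m
    · have hc : (prefFinset (1 : Equiv.Perm (Fin s.length)) m).card = m := pref_card _ hm
      have := sig_card_le_rk s (prefFinset (1 : Equiv.Perm (Fin s.length)) m)
      rwa [hc] at this
  have hseq : rankSeq (freedomRk s) (1 : Equiv.Perm (Fin s.length)) = s := by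
    apply List.ext_get (rankSeq_length s 1)
    intro j h1 h2
    rw [rankSeq_get s 1 h1, hrk (j+1) h2, hrk j (le_of_lt h2)]
    have hss := sig_succ s h2
    cases hget : s.get ⟨j, h2⟩
    · rw [hget] at hss
      simp at hss
      apply decide_eq_false
      omega
    · rw [hget] at hss
      simp at hss
      exact decide_eq_true (by omega)
  apply Finset.card_ne_zero.mpr
  exact ⟨1, Finset.mem_filter.mpr ⟨Finset.mem_univ _, hseq⟩⟩

end Freedom

/-- For the freedom matroid `F(s)` of an `(n,r)`-sequence `s`:
(a) `g_u(F(s)) ≠ 0` implies `u ⊵ s`; and (b) `g_s(F(s)) ≠ 0`. -/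
theorem gCoeff_freedom (n r : ℕ) (s : List Bool) (hlen : s.length = n)
    (hwt : s.count true = r) :
    (∀ u : List Bool, u.length = n → u.count true = r →
        gCoeff (freedomRk s) u ≠ 0 → Dominates u s) ∧
      gCoeff (freedomRk s) s ≠ 0 := by
  subst hlen
  subst hwt
  exact ⟨fun u hu hcount hg => Freedom.freedom_a s u hu hcount hg, Freedom.freedom_b s⟩
end

section
/- The Tutte polynomial of every (n,r)-matroid M is a K-linear combination of the Tutte polynomials T(F(s)) of the rank-r size-n freedom matroids, as s ranges over all (n,r)-sequences. -/
open MvPolynomial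
open scoped Classical

namespace FreedomAux


/-- prefix count of `true`s -/
def cnt (l : List Bool) (j : ℕ) : ℕ := (l.take j).count true

lemma cnt_zero (l : List Bool) : cnt l 0 = 0 := rfl

lemma cnt_succ (l : List Bool) (j : ℕ) :
    cnt l (j + 1) = cnt l j + (l[j]?.toList.count true) := by
  unfold cnt
  rw [List.take_succ, List.count_append]

lemma cnt_mono_succ (l : List Bool) (j : ℕ) : cnt l j ≤ cnt l (j+1) := by
  rw [cnt_succ]; omega

lemma cnt_step (l : List Bool) (j : ℕ) : cnt l (j+1) ≤ cnt l j + 1 := by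
  rw [cnt_succ]
  have : l[j]?.toList.count true ≤ l[j]?.toList.length := List.count_le_length
  have h2 : l[j]?.toList.length ≤ 1 := by cases l[j]? <;> simp
  omega

lemma cnt_of_ge (l : List Bool) (j : ℕ) (h : l.length ≤ j) : cnt l j = l.count true := by
  unfold cnt
  rw [List.take_of_length_le h]

lemma cnt_le_count (l : List Bool) (j : ℕ) : cnt l j ≤ l.count true :=
  List.Sublist.count_le true (List.take_sublist j l)

lemma cnt_append (l₁ l₂ : List Bool) (j : ℕ) :
    cnt (l₁ ++ l₂) j = cnt l₁ j + cnt l₂ (j - l₁.length) := by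
  unfold cnt
  rw [List.take_append, List.count_append]

lemma cnt_replicate_true (k j : ℕ) : cnt (List.replicate k true) j = min j k := by
  unfold cnt
  rw [List.take_replicate, List.count_replicate]
  simp

lemma cnt_replicate_false (k j : ℕ) : cnt (List.replicate k false) j = 0 := by
  unfold cnt
  rw [List.take_replicate, List.count_replicate]
  simp

lemma cnt_pair (j : ℕ) : cnt [false, true] j = min (j - 1) 1 := by
  match j with
  | 0 => rfl
  | 1 => rfl
  | (n+2) =>
    have h : [false, true].length ≤ n + 2 := by simp
    rw [cnt_of_ge _ _ h]
    simp [List.count_cons]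




/-- prefix count of a finset -/
noncomputable def cntB {n : ℕ} (B : Finset (Fin n)) (j : ℕ) : ℕ :=
  (B.filter fun i : Fin n => (i : ℕ) < j).card

lemma cntB_zero {n : ℕ} (B : Finset (Fin n)) : cntB B 0 = 0 := by
  unfold cntB
  simp

lemma cntB_of_ge {n : ℕ} (B : Finset (Fin n)) (j : ℕ) (h : n ≤ j) : cntB B j = B.card := by
  unfold cntB
  rw [Finset.filter_true_of_mem]
  intro i _
  exact lt_of_lt_of_le i.isLt h

lemma cntB_succ' {n : ℕ} (B : Finset (Fin n)) (j : ℕ) :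
    cntB B (j+1) = cntB B j + (B.filter fun i : Fin n => (i : ℕ) = j).card := by
  unfold cntB
  rw [Finset.card_filter, Finset.card_filter, Finset.card_filter, ← Finset.sum_add_distrib]
  apply Finset.sum_congr rfl
  intro i _
  split_ifs <;> omega

lemma filter_eq_card {n : ℕ} (B : Finset (Fin n)) (j : ℕ) (h : j < n) :
    (B.filter fun i : Fin n => (i : ℕ) = j).card = (if (⟨j, h⟩ : Fin n) ∈ B then 1 else 0) := by
  split_ifs with hm
  · rw [show (B.filter fun i : Fin n => (i : ℕ) = j) = {(⟨j, h⟩ : Fin n)} from ?_]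
    · simp
    · ext x
      simp only [Finset.mem_filter, Finset.mem_singleton]
      constructor
      · rintro ⟨hx, hv⟩
        exact Fin.ext hv
      · rintro rfl
        exact ⟨hm, rfl⟩
  · rw [show (B.filter fun i : Fin n => (i : ℕ) = j) = ∅ from ?_]
    · simp
    · ext x
      simp only [Finset.mem_filter, Finset.notMem_empty, iff_false, not_and]
      intro hx hv
      exact hm (by rwa [show (⟨j, h⟩ : Fin n) = x from (Fin.ext hv.symm)])

lemma filter_eq_card_zero {n : ℕ} (B : Finset (Fin n)) (j : ℕ) (h : n ≤ j) :
    (B.filter fun i : Fin n => (i : ℕ) = j).card = 0 := by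
  rw [Finset.card_eq_zero]
  ext x
  simp only [Finset.mem_filter, Finset.notMem_empty, iff_false, not_and]
  intro _ hv
  omega

lemma cntB_succ {n : ℕ} (B : Finset (Fin n)) (j : ℕ) (h : j < n) :
    cntB B (j+1) = cntB B j + (if (⟨j, h⟩ : Fin n) ∈ B then 1 else 0) := by
  rw [cntB_succ', filter_eq_card B j h]

lemma cntB_succ_mem {n : ℕ} (B : Finset (Fin n)) (j : ℕ) (h : j < n)
    (hm : (⟨j, h⟩ : Fin n) ∈ B) : cntB B (j+1) = cntB B j + 1 := by
  rw [cntB_succ B j h, if_pos hm]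

lemma cnt_indList {n : ℕ} (B : Finset (Fin n)) (j : ℕ) : cnt (indList B) j = cntB B j := by
  induction j with
  | zero => rw [cntB_zero]; rfl
  | succ j ih =>
    rw [cnt_succ, ih]
    by_cases h : j < n
    · rw [cntB_succ B j h]
      have : (indList B)[j]? = some (decide ((⟨j, h⟩ : Fin n) ∈ B)) := by
        unfold indList
        rw [List.getElem?_eq_getElem (by simpa using h)]
        simp
      rw [this]
      by_cases hm : (⟨j, h⟩ : Fin n) ∈ B <;> simp [hm]
    · have hn : n ≤ j := by omega
      have h1 : (indList B)[j]? = none := by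
        apply List.getElem?_eq_none
        simpa [indList] using hn
      rw [h1]
      have h2 : cntB B (j+1) = cntB B j := by
        rw [cntB_of_ge B j hn, cntB_of_ge B (j+1) (by omega)]
      simp [h2]

lemma length_indList {n : ℕ} (B : Finset (Fin n)) : (indList B).length = n := by
  simp [indList]

lemma count_indList {n : ℕ} (B : Finset (Fin n)) : (indList B).count true = B.card := by
  have := cnt_indList B n
  rw [cnt_of_ge _ _ (le_of_eq (length_indList B)), cntB_of_ge _ _ le_rfl] at this
  exact this

lemma dominates_iff {n : ℕ} (s : List Bool) (B : Finset (Fin n)) :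
    Dominates s (indList B) ↔ ∀ j, cntB B j ≤ cnt s j := by
  unfold Dominates
  constructor
  · intro h j; have := h j; rw [← cnt_indList]; exact this
  · intro h j; rw [show ((indList B).take j).count true = cnt (indList B) j from rfl,
      cnt_indList]; exact h j


section FreedomRank

lemma freedomRk_le (s : List Bool) (A : Finset (Fin s.length)) (j : ℕ) :
    freedomRk s A ≤ cnt s j + (A.filter fun i : Fin s.length => j ≤ (i : ℕ)).card := by
  apply Finset.sup_le
  intro B hB
  rw [Finset.mem_filter] at hB
  obtain ⟨hBcard, hBdom⟩ := hB.2
  have hsplit := Finset.card_filter_add_card_filter_not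
    (s := A ∩ B) (p := fun i : Fin s.length => (i : ℕ) < j)
  have h1 : ((A ∩ B).filter fun i : Fin s.length => (i : ℕ) < j).card ≤ cnt s j := by
    calc ((A ∩ B).filter fun i : Fin s.length => (i : ℕ) < j).card
        ≤ cntB B j := by
          apply Finset.card_le_card
          intro x hx
          rw [Finset.mem_filter] at hx ⊢
          exact ⟨(Finset.mem_inter.mp hx.1).2, hx.2⟩
      _ ≤ cnt s j := (dominates_iff s B).mp hBdom j
  have h2 : ((A ∩ B).filter fun i : Fin s.length => ¬ ((i : ℕ) < j)).card ≤
      (A.filter fun i : Fin s.length => j ≤ (i : ℕ)).card := by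
    apply Finset.card_le_card
    intro x hx
    rw [Finset.mem_filter] at hx ⊢
    exact ⟨(Finset.mem_inter.mp hx.1).1, by omega⟩
  omega

lemma cntB_insert (s : List Bool) (I : Finset (Fin s.length)) (e : Fin s.length)
    (he : e ∉ I) (j : ℕ) :
    cntB (insert e I) j = cntB I j + (if (e : ℕ) < j then 1 else 0) := by
  unfold cntB
  rw [Finset.filter_insert]
  split_ifs with h
  · rw [Finset.card_insert_of_notMem (by simp [he])]
  · rfl

lemma exists_basis_superset (s : List Bool) :
    ∀ (d : ℕ) (I : Finset (Fin s.length)), (∀ j, cntB I j ≤ cnt s j) →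
    I.card + d = s.count true → ∃ B, I ⊆ B ∧ IsFreedomBasis s B := by
  intro d
  induction d with
  | zero =>
    intro I hdom hcard
    exact ⟨I, Finset.Subset.refl I, ⟨by omega, (dominates_iff s I).mpr hdom⟩⟩
  | succ d ih =>
    intro I hdom hcard
    set k0 := Nat.findGreatest (fun k => cnt s k ≤ cntB I k) s.length with hk0def
    have hk0P : cnt s k0 ≤ cntB I k0 :=
      Nat.findGreatest_spec (P := fun k => cnt s k ≤ cntB I k) (Nat.zero_le _)
        (by show cnt s 0 ≤ cntB I 0; rw [cnt_zero]; exact Nat.zero_le _)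
    have hk0le : k0 ≤ s.length := Nat.findGreatest_le _
    have hk0lt : k0 < s.length := by
      rcases Nat.lt_or_ge k0 s.length with h | h
      · exact h
      · exfalso
        have h1 : cnt s k0 = s.count true := cnt_of_ge s k0 h
        have h2 : cntB I k0 = I.card := cntB_of_ge I k0 h
        omega
    have hgt : ∀ j, k0 < j → cntB I j < cnt s j := by
      intro j hj
      by_cases hjm : j ≤ s.length
      · have := Nat.findGreatest_is_greatest (by omega : Nat.findGreatest
          (fun k => cnt s k ≤ cntB I k) s.length < j) hjm
        simp only [not_le] at this
        exact this
      · rw [cnt_of_ge s j (by omega), cntB_of_ge I j (by omega)]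
        omega
    set e : Fin s.length := ⟨k0, hk0lt⟩ with hedef
    have he : e ∉ I := by
      intro hmem
      have h1 : cntB I (k0+1) = cntB I k0 + 1 := cntB_succ_mem I k0 hk0lt hmem
      have h2 := hgt (k0+1) (Nat.lt_succ_self k0)
      have h3 := cnt_step s k0
      omega
    have hdom' : ∀ j, cntB (insert e I) j ≤ cnt s j := by
      intro j
      rw [cntB_insert s I e he j]
      by_cases hj : (e : ℕ) < j
      · rw [if_pos hj]
        have := hgt j hj
        omega
      · rw [if_neg hj]
        exact hdom j
    obtain ⟨B, hIB, hBasis⟩ := ih (insert e I) hdom'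
      (by rw [Finset.card_insert_of_notMem he]; omega)
    exact ⟨B, (Finset.subset_insert e I).trans hIB, hBasis⟩

lemma le_freedomRk (s : List Bool) (A I : Finset (Fin s.length)) (hIA : I ⊆ A)
    (hdom : ∀ j, cntB I j ≤ cnt s j) (hcard : I.card ≤ s.count true) :
    I.card ≤ freedomRk s A := by
  obtain ⟨B, hIB, hBasis⟩ := exists_basis_superset s (s.count true - I.card) I hdom (by omega)
  calc I.card ≤ (A ∩ B).card := Finset.card_le_card (Finset.subset_inter hIA hIB)
    _ ≤ freedomRk s A := Finset.le_sup (f := fun B => (A ∩ B).card)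
        (Finset.mem_filter.mpr ⟨Finset.mem_univ _, hBasis⟩)

end FreedomRank

section Cards

variable {m : ℕ}

lemma card_le_of_val_window (P : Finset (Fin m)) (lo hi : ℕ)
    (h : ∀ i ∈ P, lo ≤ (i : ℕ) ∧ (i : ℕ) < hi) : P.card ≤ hi - lo := by
  calc P.card = (P.image fun i : Fin m => (i : ℕ)).card :=
        (Finset.card_image_of_injective P Fin.val_injective).symm
    _ ≤ (Finset.Ico lo hi).card := by
        apply Finset.card_le_card
        intro x hx
        rw [Finset.mem_image] at hx
        obtain ⟨i, hi', rfl⟩ := hx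
        exact Finset.mem_Ico.mpr (h i hi')
    _ = hi - lo := Nat.card_Ico lo hi

lemma card_univ_val_window (lo hi : ℕ) (hhi : hi ≤ m) :
    ((Finset.univ : Finset (Fin m)).filter fun i : Fin m => lo ≤ (i : ℕ) ∧ (i : ℕ) < hi).card
      = hi - lo := by
  rw [← Nat.card_Ico lo hi]
  refine Finset.card_bij (fun i _ => (i : ℕ)) ?_ ?_ ?_
  · intro a ha
    rw [Finset.mem_filter] at ha
    exact Finset.mem_Ico.mpr ha.2
  · intro a _ b _ hab
    exact Fin.val_injective hab
  · intro b hb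
    rw [Finset.mem_Ico] at hb
    exact ⟨⟨b, lt_of_lt_of_le hb.2 hhi⟩,
      Finset.mem_filter.mpr ⟨Finset.mem_univ _, by simpa using hb⟩, rfl⟩

lemma cntB_le_card (P : Finset (Fin m)) (j : ℕ) : cntB P j ≤ P.card :=
  Finset.card_le_card (Finset.filter_subset _ P)

lemma cntB_le_sub (P : Finset (Fin m)) (lo j : ℕ) (h : ∀ i ∈ P, lo ≤ (i : ℕ)) :
    cntB P j ≤ j - lo := by
  apply card_le_of_val_window _ lo j
  intro i hi
  rw [Finset.mem_filter] at hi
  exact ⟨h i hi.1, hi.2⟩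

lemma card_filter_tri (A : Finset (Fin m)) (t1 t2 : ℕ) :
    (A.filter fun i : Fin m => t1 ≤ (i : ℕ)).card
      = (A.filter fun i : Fin m => t1 ≤ (i : ℕ) ∧ (i : ℕ) < t2).card
        + (A.filter fun i : Fin m => t2 ≤ (i : ℕ) ∧ t1 ≤ (i : ℕ)).card := by
  have h := Finset.card_filter_add_card_filter_not
    (s := A.filter fun i : Fin m => t1 ≤ (i : ℕ)) (p := fun i : Fin m => (i : ℕ) < t2)
  rw [Finset.filter_filter, Finset.filter_filter] at h
  have h2 : (A.filter fun i : Fin m => t1 ≤ (i : ℕ) ∧ ¬ (i : ℕ) < t2)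
      = A.filter fun i : Fin m => t2 ≤ (i : ℕ) ∧ t1 ≤ (i : ℕ) := by
    ext x
    simp only [Finset.mem_filter]
    constructor
    · rintro ⟨h1, h2⟩
      exact ⟨h1, by omega⟩
    · rintro ⟨h1, h2⟩
      exact ⟨h1, by omega⟩
  rw [h2] at h
  omega

lemma card_filter_tri' (A : Finset (Fin m)) (t1 t2 : ℕ) (h12 : t1 ≤ t2) :
    (A.filter fun i : Fin m => t1 ≤ (i : ℕ)).card
      = (A.filter fun i : Fin m => t1 ≤ (i : ℕ) ∧ (i : ℕ) < t2).card
        + (A.filter fun i : Fin m => t2 ≤ (i : ℕ)).card := by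
  rw [card_filter_tri A t1 t2]
  congr 1
  have h2 : (A.filter fun i : Fin m => t2 ≤ (i : ℕ) ∧ t1 ≤ (i : ℕ))
      = A.filter fun i : Fin m => t2 ≤ (i : ℕ) := by
    ext x
    simp only [Finset.mem_filter]
    constructor
    · rintro ⟨h1, h2⟩
      exact ⟨h1, h2.1⟩
    · rintro ⟨h1, h2⟩
      exact ⟨h1, h2, by omega⟩
  rw [h2]

lemma cntB_union_le (P Q : Finset (Fin m)) (j : ℕ) :
    cntB (P ∪ Q) j ≤ cntB P j + cntB Q j := by
  unfold cntB
  rw [Finset.filter_union]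
  exact Finset.card_union_le _ _

end Cards

section PropA

/-- rank formula for 4-block sequences `0^b 1^(r-c) 0^(n-r-b) 1^c` -/
lemma freedomRk_formula_A (n r b c : ℕ) (hr : r ≤ n) (hb : b + r ≤ n) (hc : c ≤ r)
    (s : List Bool) (hlen : s.length = n) (hcount : s.count true = r)
    (hcnt : ∀ j, cnt s j = min (j - b) (r - c) + min (j - (n - c)) c)
    (A : Finset (Fin s.length)) :
    freedomRk s A = min ((A.filter fun i : Fin s.length => b ≤ (i : ℕ)).card)
      ((r - c) + (A.filter fun i : Fin s.length => n - c ≤ (i : ℕ)).card) := by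
  set W := (A.filter fun i : Fin s.length => b ≤ (i : ℕ)).card with hW
  set E := (A.filter fun i : Fin s.length => n - c ≤ (i : ℕ)).card with hE
  apply le_antisymm
  · apply le_min
    · have h := freedomRk_le s A b
      rw [hcnt b] at h
      have h0 : min (b - b) (r - c) + min (b - (n - c)) c = 0 := by omega
      rw [h0] at h
      simpa using h
    · have h := freedomRk_le s A (n - c)
      rw [hcnt (n - c)] at h
      have h0 : min ((n - c) - b) (r - c) + min ((n - c) - (n - c)) c = r - c := by omega
      rw [h0] at h
      exact h
  · -- construction of an independent subset of A
    set X1 := A.filter fun i : Fin s.length => b ≤ (i : ℕ) ∧ (i : ℕ) < b + (r - c) with hX1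
    set X2 := A.filter fun i : Fin s.length =>
      b + (r - c) ≤ (i : ℕ) ∧ (i : ℕ) < n - c with hX2
    set X3 := A.filter fun i : Fin s.length => n - c ≤ (i : ℕ) with hX3
    obtain ⟨X2', hX2'sub, hX2'card⟩ :=
      Finset.exists_subset_card_eq (min_le_left X2.card ((r - c) - X1.card))
    set I := X1 ∪ X2' ∪ X3 with hI
    have hval : ∀ i : Fin s.length, (i : ℕ) < n := fun i => hlen ▸ i.isLt
    have hX1w : ∀ i ∈ X1, b ≤ (i : ℕ) ∧ (i : ℕ) < b + (r - c) := by
      intro i hi; rw [hX1, Finset.mem_filter] at hi; exact hi.2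
    have hX2w : ∀ i ∈ X2', b + (r - c) ≤ (i : ℕ) ∧ (i : ℕ) < n - c := by
      intro i hi
      have := hX2'sub hi
      rw [hX2, Finset.mem_filter] at this; exact this.2
    have hX3w : ∀ i ∈ X3, n - c ≤ (i : ℕ) ∧ (i : ℕ) < n := by
      intro i hi; rw [hX3, Finset.mem_filter] at hi; exact ⟨hi.2, hval i⟩
    have hX1card : X1.card ≤ r - c := by
      have := card_le_of_val_window X1 b (b + (r - c)) hX1w
      omega
    have hX3card : X3.card ≤ c := by
      have := card_le_of_val_window X3 (n - c) n hX3w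
      omega
    have hd1 : Disjoint X1 X2' := by
      rw [Finset.disjoint_left]
      intro a h1 h2
      have := hX1w a h1
      have := hX2w a h2
      omega
    have hd2 : Disjoint (X1 ∪ X2') X3 := by
      rw [Finset.disjoint_left]
      intro a h1 h2
      have h3 := hX3w a h2
      rcases Finset.mem_union.mp h1 with h | h
      · have := hX1w a h; omega
      · have := hX2w a h; omega
    have hIcard : I.card = X1.card + X2'.card + X3.card := by
      rw [hI, Finset.card_union_of_disjoint hd2, Finset.card_union_of_disjoint hd1]
    have hIA : I ⊆ A := by
      intro x hx
      rcases Finset.mem_union.mp hx with h | h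
      · rcases Finset.mem_union.mp h with h' | h'
        · exact Finset.mem_of_mem_filter x h'
        · exact Finset.mem_of_mem_filter x (hX2'sub h')
      · exact Finset.mem_of_mem_filter x h
    have hdom : ∀ j, cntB I j ≤ cnt s j := by
      intro j
      rw [hcnt j]
      have hu : cntB I j ≤ cntB X1 j + cntB X2' j + cntB X3 j := by
        calc cntB I j ≤ cntB (X1 ∪ X2') j + cntB X3 j := cntB_union_le _ _ j
          _ ≤ cntB X1 j + cntB X2' j + cntB X3 j := by
              have := cntB_union_le X1 X2' j; omega
      have p1a : cntB X1 j ≤ j - b := cntB_le_sub X1 b j (fun i hi => (hX1w i hi).1)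
      have p1b : cntB X1 j ≤ X1.card := cntB_le_card X1 j
      have p2a : cntB X2' j ≤ j - (b + (r - c)) :=
        cntB_le_sub X2' (b + (r - c)) j (fun i hi => (hX2w i hi).1)
      have p2b : cntB X2' j ≤ X2'.card := cntB_le_card X2' j
      have p3a : cntB X3 j ≤ j - (n - c) := cntB_le_sub X3 (n - c) j (fun i hi => (hX3w i hi).1)
      have p3b : cntB X3 j ≤ X3.card := cntB_le_card X3 j
      omega
    have hWsplit : W = X1.card + (X2.card + X3.card) := by
      rw [hW, card_filter_tri' A b (b + (r - c)) (by omega)]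
      congr 1
      rw [card_filter_tri' A (b + (r - c)) (n - c) (by omega)]
    have hIr : I.card ≤ s.count true := by
      rw [hcount, hIcard]
      omega
    have := le_freedomRk s A I hIA hdom hIr
    rw [hIcard] at this
    omega

end PropA

section PropB

/-- rank formula for sequences `0^b 1^(r-c-1) 0 1 0^(n-r-b-1) 1^c` -/
lemma freedomRk_formula_B (n r b c : ℕ) (hr : r ≤ n) (hb : b + r < n) (hc : c < r)
    (s : List Bool) (hlen : s.length = n) (hcount : s.count true = r)
    (hcnt : ∀ j, cnt s j = min (j - b) (r - c - 1) + min (j - (b + (r - c))) 1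
      + min (j - (n - c)) c)
    (A : Finset (Fin s.length)) :
    freedomRk s A = min ((A.filter fun i : Fin s.length => b ≤ (i : ℕ)).card)
      (min ((r - c) - 1 + (A.filter fun i : Fin s.length => b + (r - c) ≤ (i : ℕ)).card)
        ((r - c) + (A.filter fun i : Fin s.length => n - c ≤ (i : ℕ)).card)) := by
  set W := (A.filter fun i : Fin s.length => b ≤ (i : ℕ)).card with hW
  set Md := (A.filter fun i : Fin s.length => b + (r - c) ≤ (i : ℕ)).card with hMd
  set E := (A.filter fun i : Fin s.length => n - c ≤ (i : ℕ)).card with hE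
  apply le_antisymm
  · apply le_min
    · have h := freedomRk_le s A b
      rw [hcnt b] at h
      have h0 : min (b - b) (r - c - 1) + min (b - (b + (r - c))) 1 + min (b - (n - c)) c
          = 0 := by omega
      rw [h0] at h
      simpa using h
    · apply le_min
      · have h := freedomRk_le s A (b + (r - c))
        rw [hcnt (b + (r - c))] at h
        have h0 : min ((b + (r - c)) - b) (r - c - 1) + min ((b + (r - c)) - (b + (r - c))) 1
            + min ((b + (r - c)) - (n - c)) c = (r - c) - 1 := by omega
        rw [h0] at h
        exact h
      · have h := freedomRk_le s A (n - c)
        rw [hcnt (n - c)] at h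
        have h0 : min ((n - c) - b) (r - c - 1) + min ((n - c) - (b + (r - c))) 1
            + min ((n - c) - (n - c)) c = r - c := by omega
        rw [h0] at h
        exact h
  · set Y1 := A.filter fun i : Fin s.length => b ≤ (i : ℕ) ∧ (i : ℕ) < b + (r - c) with hY1
    set Y2 := A.filter fun i : Fin s.length =>
      b + (r - c) ≤ (i : ℕ) ∧ (i : ℕ) < n - c with hY2
    set Y3 := A.filter fun i : Fin s.length => n - c ≤ (i : ℕ) with hY3
    obtain ⟨Y1', hY1'sub, hY1'card⟩ :=
      Finset.exists_subset_card_eq (min_le_left Y1.card ((r - c) - 1))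
    obtain ⟨Y2', hY2'sub, hY2'card⟩ :=
      Finset.exists_subset_card_eq (min_le_left Y2.card ((r - c) - min Y1.card ((r - c) - 1)))
    set I := Y1' ∪ Y2' ∪ Y3 with hI
    have hval : ∀ i : Fin s.length, (i : ℕ) < n := fun i => hlen ▸ i.isLt
    have hY1w : ∀ i ∈ Y1', b ≤ (i : ℕ) ∧ (i : ℕ) < b + (r - c) := by
      intro i hi
      have := hY1'sub hi
      rw [hY1, Finset.mem_filter] at this; exact this.2
    have hY2w : ∀ i ∈ Y2', b + (r - c) ≤ (i : ℕ) ∧ (i : ℕ) < n - c := by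
      intro i hi
      have := hY2'sub hi
      rw [hY2, Finset.mem_filter] at this; exact this.2
    have hY3w : ∀ i ∈ Y3, n - c ≤ (i : ℕ) ∧ (i : ℕ) < n := by
      intro i hi; rw [hY3, Finset.mem_filter] at hi; exact ⟨hi.2, hval i⟩
    have hY1card : Y1.card ≤ r - c := by
      have : ∀ i ∈ Y1, b ≤ (i : ℕ) ∧ (i : ℕ) < b + (r - c) := by
        intro i hi; rw [hY1, Finset.mem_filter] at hi; exact hi.2
      have := card_le_of_val_window Y1 b (b + (r - c)) this
      omega
    have hY3card : Y3.card ≤ c := by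
      have := card_le_of_val_window Y3 (n - c) n hY3w
      omega
    have hd1 : Disjoint Y1' Y2' := by
      rw [Finset.disjoint_left]
      intro a h1 h2
      have := hY1w a h1
      have := hY2w a h2
      omega
    have hd2 : Disjoint (Y1' ∪ Y2') Y3 := by
      rw [Finset.disjoint_left]
      intro a h1 h2
      have h3 := hY3w a h2
      rcases Finset.mem_union.mp h1 with h | h
      · have := hY1w a h; omega
      · have := hY2w a h; omega
    have hIcard : I.card = Y1'.card + Y2'.card + Y3.card := by
      rw [hI, Finset.card_union_of_disjoint hd2, Finset.card_union_of_disjoint hd1]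
    have hIA : I ⊆ A := by
      intro x hx
      rcases Finset.mem_union.mp hx with h | h
      · rcases Finset.mem_union.mp h with h' | h'
        · exact Finset.mem_of_mem_filter x (hY1'sub h')
        · exact Finset.mem_of_mem_filter x (hY2'sub h')
      · exact Finset.mem_of_mem_filter x h
    have hdom : ∀ j, cntB I j ≤ cnt s j := by
      intro j
      rw [hcnt j]
      have hu : cntB I j ≤ cntB Y1' j + cntB Y2' j + cntB Y3 j := by
        calc cntB I j ≤ cntB (Y1' ∪ Y2') j + cntB Y3 j := cntB_union_le _ _ j
          _ ≤ cntB Y1' j + cntB Y2' j + cntB Y3 j := by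
              have := cntB_union_le Y1' Y2' j; omega
      have p1a : cntB Y1' j ≤ j - b := cntB_le_sub Y1' b j (fun i hi => (hY1w i hi).1)
      have p1b : cntB Y1' j ≤ Y1'.card := cntB_le_card Y1' j
      have p2a : cntB Y2' j ≤ j - (b + (r - c)) :=
        cntB_le_sub Y2' (b + (r - c)) j (fun i hi => (hY2w i hi).1)
      have p2b : cntB Y2' j ≤ Y2'.card := cntB_le_card Y2' j
      have p3a : cntB Y3 j ≤ j - (n - c) := cntB_le_sub Y3 (n - c) j (fun i hi => (hY3w i hi).1)
      have p3b : cntB Y3 j ≤ Y3.card := cntB_le_card Y3 j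
      omega
    have hWsplit : W = Y1.card + (Y2.card + Y3.card) := by
      rw [hW, card_filter_tri' A b (b + (r - c)) (by omega)]
      congr 1
      rw [card_filter_tri' A (b + (r - c)) (n - c) (by omega)]
    have hMdsplit : Md = Y2.card + Y3.card := by
      rw [hMd, card_filter_tri' A (b + (r - c)) (n - c) (by omega)]
    have hIr : I.card ≤ s.count true := by
      rw [hcount, hIcard]
      omega
    have := le_freedomRk s A I hIA hdom hIr
    rw [hIcard] at this
    omega

end PropB

section Instantiate

variable (K : Type*) [Field K]

/-- the sequence `0^b 1^(r-c) 0^(n-r-b) 1^c` -/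
def sA (n r b c : ℕ) : List Bool :=
  List.replicate b false ++ (List.replicate (r - c) true ++
    (List.replicate (n - r - b) false ++ List.replicate c true))

/-- the sequence `0^b 1^(r-c-1) 0 1 0^(n-r-b-1) 1^c` -/
def sB (n r b c : ℕ) : List Bool :=
  List.replicate b false ++ (List.replicate (r - c - 1) true ++
    ([false, true] ++ (List.replicate (n - r - b - 1) false ++ List.replicate c true)))

lemma length_sA (n r b c : ℕ) (hb : b + r ≤ n) (hc : c ≤ r) : (sA n r b c).length = n := by
  simp [sA]
  omega

lemma count_sA (n r b c : ℕ) (hc : c ≤ r) : (sA n r b c).count true = r := by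
  simp [sA, List.count_append, List.count_replicate]
  omega

lemma cnt_sA (n r b c : ℕ) (hb : b + r ≤ n) (hc : c ≤ r) (j : ℕ) :
    cnt (sA n r b c) j = min (j - b) (r - c) + min (j - (n - c)) c := by
  unfold sA
  rw [cnt_append, cnt_append, cnt_append, cnt_replicate_false, cnt_replicate_true,
    cnt_replicate_false, cnt_replicate_true]
  simp only [List.length_replicate]
  omega

lemma length_sB (n r b c : ℕ) (hb : b + r < n) (hc : c < r) : (sB n r b c).length = n := by
  simp [sB]
  omega

lemma count_sB (n r b c : ℕ) (hc : c < r) : (sB n r b c).count true = r := by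
  simp [sB, List.count_append, List.count_replicate]
  omega

lemma cnt_sB (n r b c : ℕ) (hb : b + r < n) (hc : c < r) (j : ℕ) :
    cnt (sB n r b c) j = min (j - b) (r - c - 1) + min (j - (b + (r - c))) 1
      + min (j - (n - c)) c := by
  unfold sB
  rw [cnt_append, cnt_append, cnt_append, cnt_append, cnt_replicate_false, cnt_replicate_true,
    cnt_pair, cnt_replicate_false, cnt_replicate_true]
  simp only [List.length_replicate, List.length_cons, List.length_nil]
  omega

/-- explicit rank function of `F(sA)` on `Fin n` -/
noncomputable def rkA (n r b c : ℕ) (A : Finset (Fin n)) : ℕ :=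
  min ((A.filter fun i : Fin n => b ≤ (i : ℕ)).card)
    ((r - c) + (A.filter fun i : Fin n => n - c ≤ (i : ℕ)).card)

/-- explicit rank function of `F(sB)` on `Fin n` -/
noncomputable def rkB (n r b c : ℕ) (A : Finset (Fin n)) : ℕ :=
  min ((A.filter fun i : Fin n => b ≤ (i : ℕ)).card)
    (min ((r - c) - 1 + (A.filter fun i : Fin n => b + (r - c) ≤ (i : ℕ)).card)
      ((r - c) + (A.filter fun i : Fin n => n - c ≤ (i : ℕ)).card))

lemma filter_map_val {m n : ℕ} (hlen : m = n) (A : Finset (Fin m)) (t : ℕ) :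
    ((A.map (finCongr hlen).toEmbedding).filter fun i : Fin n => t ≤ (i : ℕ)).card
      = (A.filter fun i : Fin m => t ≤ (i : ℕ)).card := by
  rw [Finset.filter_map, Finset.card_map]
  congr 1

lemma freedomTutte_eq_sum (s : List Bool) {n : ℕ} (hlen : s.length = n)
    (rk : Finset (Fin n) → ℕ)
    (hrk : ∀ A : Finset (Fin s.length), freedomRk s A = rk (A.map (finCongr hlen).toEmbedding)) :
    freedomTutte K s = ∑ A : Finset (Fin n),
      (X 0 - 1) ^ (s.count true - rk A) * (X 1 - 1) ^ (A.card - rk A) := by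
  unfold freedomTutte tutte
  apply Fintype.sum_equiv ((finCongr hlen).finsetCongr)
  intro A
  rw [Equiv.finsetCongr_apply, hrk A, Finset.card_map]

lemma freedomTutte_sA (n r b c : ℕ) (hr : r ≤ n) (hb : b + r ≤ n) (hc : c ≤ r) :
    freedomTutte K (sA n r b c) = ∑ A : Finset (Fin n),
      (X 0 - 1) ^ (r - rkA n r b c A) * (X 1 - 1) ^ (A.card - rkA n r b c A) := by
  rw [freedomTutte_eq_sum K (sA n r b c) (length_sA n r b c hb hc) (rkA n r b c) ?_]
  · rw [count_sA n r b c hc]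
  · intro A
    rw [freedomRk_formula_A n r b c hr hb hc (sA n r b c) (length_sA n r b c hb hc)
      (count_sA n r b c hc) (cnt_sA n r b c hb hc) A]
    unfold rkA
    rw [filter_map_val (length_sA n r b c hb hc) A b,
      filter_map_val (length_sA n r b c hb hc) A (n - c)]

lemma freedomTutte_sB (n r b c : ℕ) (hr : r ≤ n) (hb : b + r < n) (hc : c < r) :
    freedomTutte K (sB n r b c) = ∑ A : Finset (Fin n),
      (X 0 - 1) ^ (r - rkB n r b c A) * (X 1 - 1) ^ (A.card - rkB n r b c A) := by
  rw [freedomTutte_eq_sum K (sB n r b c) (length_sB n r b c hb hc) (rkB n r b c) ?_]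
  · rw [count_sB n r b c hc]
  · intro A
    rw [freedomRk_formula_B n r b c hr hb hc (sB n r b c) (length_sB n r b c hb hc)
      (count_sB n r b c hc) (cnt_sB n r b c hb hc) A]
    unfold rkB
    rw [filter_map_val (length_sB n r b c hb hc) A b,
      filter_map_val (length_sB n r b c hb hc) A (b + (r - c)),
      filter_map_val (length_sB n r b c hb hc) A (n - c)]

end Instantiate

section Key

variable (K : Type*) [Field K]

/-- `(x-1)^u (y-1)^v` -/
noncomputable def eP (u v : ℕ) : MvPolynomial (Fin 2) K :=
  (X 0 - 1) ^ u * (X 1 - 1) ^ v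

/-- difference generator -/
noncomputable def dP (u v : ℕ) : MvPolynomial (Fin 2) K :=
  eP K u v - eP K (u + 1) (v + 1)

variable {n r b c : ℕ}

/-- region cardinalities -/
noncomputable def regAl (n b : ℕ) (A : Finset (Fin n)) : ℕ :=
  (A.filter fun i : Fin n => (i : ℕ) < b).card
noncomputable def regBe (n r b c : ℕ) (A : Finset (Fin n)) : ℕ :=
  (A.filter fun i : Fin n => b ≤ (i : ℕ) ∧ (i : ℕ) < b + (r - c)).card
noncomputable def regDe (n r b c : ℕ) (A : Finset (Fin n)) : ℕ :=
  (A.filter fun i : Fin n => b + (r - c) ≤ (i : ℕ) ∧ (i : ℕ) < n - c).card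
noncomputable def regEp (n c : ℕ) (A : Finset (Fin n)) : ℕ :=
  (A.filter fun i : Fin n => n - c ≤ (i : ℕ)).card

lemma card_split_lt (A : Finset (Fin n)) (t : ℕ) :
    A.card = (A.filter fun i : Fin n => (i : ℕ) < t).card
      + (A.filter fun i : Fin n => t ≤ (i : ℕ)).card := by
  have h := Finset.card_filter_add_card_filter_not
    (s := A) (p := fun i : Fin n => (i : ℕ) < t)
  have h2 : (A.filter fun i : Fin n => ¬ (i : ℕ) < t)
      = A.filter fun i : Fin n => t ≤ (i : ℕ) := by
    ext x
    simp only [Finset.mem_filter]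
    constructor
    · rintro ⟨h1, h2⟩; exact ⟨h1, by omega⟩
    · rintro ⟨h1, h2⟩; exact ⟨h1, by omega⟩
  rw [h2] at h
  omega

lemma regions_card (hb : b + r < n) (hc : c < r) (A : Finset (Fin n)) :
    A.card = regAl n b A + (regBe n r b c A + (regDe n r b c A + regEp n c A)) := by
  rw [card_split_lt A b]
  unfold regAl regBe regDe regEp
  congr 1
  rw [card_filter_tri' A b (b + (r - c)) (by omega)]
  congr 1
  rw [card_filter_tri' A (b + (r - c)) (n - c) (by omega)]

lemma regions_W (hb : b + r < n) (hc : c < r) (A : Finset (Fin n)) :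
    (A.filter fun i : Fin n => b ≤ (i : ℕ)).card
      = regBe n r b c A + (regDe n r b c A + regEp n c A) := by
  unfold regBe regDe regEp
  rw [card_filter_tri' A b (b + (r - c)) (by omega)]
  congr 1
  rw [card_filter_tri' A (b + (r - c)) (n - c) (by omega)]

lemma regions_M (hb : b + r < n) (hc : c < r) (A : Finset (Fin n)) :
    (A.filter fun i : Fin n => b + (r - c) ≤ (i : ℕ)).card
      = regDe n r b c A + regEp n c A := by
  unfold regDe regEp
  rw [card_filter_tri' A (b + (r - c)) (n - c) (by omega)]

lemma regBe_le (A : Finset (Fin n)) : regBe n r b c A ≤ r - c := by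
  unfold regBe
  have := card_le_of_val_window (A.filter fun i : Fin n =>
    b ≤ (i : ℕ) ∧ (i : ℕ) < b + (r - c)) b (b + (r - c)) ?_
  · omega
  · intro i hi
    rw [Finset.mem_filter] at hi
    exact hi.2

lemma regEp_le (hc : c ≤ n) (A : Finset (Fin n)) : regEp n c A ≤ c := by
  unfold regEp
  have := card_le_of_val_window (A.filter fun i : Fin n => n - c ≤ (i : ℕ)) (n - c) n ?_
  · omega
  · intro i hi
    rw [Finset.mem_filter] at hi
    exact ⟨hi.2, i.isLt⟩

lemma term_diff (hr : r ≤ n) (hb : b + r < n) (hc : c < r) (A : Finset (Fin n)) :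
    eP K (r - rkA n r b c A) (A.card - rkA n r b c A)
      - eP K (r - rkB n r b c A) (A.card - rkB n r b c A)
    = if regBe n r b c A = r - c ∧ regDe n r b c A = 0
      then dP K (c - regEp n c A) (regAl n b A) else 0 := by
  have hcard := regions_card hb hc A
  have hW := regions_W hb hc A
  have hM := regions_M hb hc A
  have hbe := regBe_le (n := n) (r := r) (b := b) (c := c) A
  have hep := regEp_le (by omega : c ≤ n) A
  have hrkA : rkA n r b c A = min (regBe n r b c A + (regDe n r b c A + regEp n c A))
      ((r - c) + regEp n c A) := by
    unfold rkA
    rw [hW]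
    rfl
  have hrkB : rkB n r b c A = min (regBe n r b c A + (regDe n r b c A + regEp n c A))
      (min ((r - c) - 1 + (regDe n r b c A + regEp n c A)) ((r - c) + regEp n c A)) := by
    unfold rkB
    rw [hW, hM]
    rfl
  by_cases hdrop : regBe n r b c A = r - c ∧ regDe n r b c A = 0
  · rw [if_pos hdrop]
    have e1 : r - rkA n r b c A = c - regEp n c A := by rw [hrkA]; omega
    have e2 : A.card - rkA n r b c A = regAl n b A := by rw [hrkA]; omega
    have e3 : r - rkB n r b c A = (c - regEp n c A) + 1 := by rw [hrkB]; omega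
    have e4 : A.card - rkB n r b c A = regAl n b A + 1 := by rw [hrkB]; omega
    rw [e1, e2, e3, e4]
    rfl
  · rw [if_neg hdrop]
    have : rkA n r b c A = rkB n r b c A := by rw [hrkA, hrkB]; omega
    rw [this, sub_self]

end Key

section Key2

variable (K : Type*) [Field K]
variable {n r b c : ℕ}

noncomputable def Z1 (n b : ℕ) : Finset (Fin n) :=
  Finset.univ.filter fun i : Fin n => (i : ℕ) < b
noncomputable def O1 (n r b c : ℕ) : Finset (Fin n) :=
  Finset.univ.filter fun i : Fin n => b ≤ (i : ℕ) ∧ (i : ℕ) < b + (r - c)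
noncomputable def O2 (n c : ℕ) : Finset (Fin n) :=
  Finset.univ.filter fun i : Fin n => n - c ≤ (i : ℕ)

lemma card_Z1 (hbn : b ≤ n) : (Z1 n b).card = b := by
  unfold Z1
  have h : (Finset.univ.filter fun i : Fin n => (i : ℕ) < b)
      = Finset.univ.filter fun i : Fin n => 0 ≤ (i : ℕ) ∧ (i : ℕ) < b := by
    ext x; simp
  rw [h, card_univ_val_window 0 b hbn]
  omega

lemma card_O1 (h : b + (r - c) ≤ n) : (O1 n r b c).card = r - c := by
  unfold O1
  rw [card_univ_val_window b (b + (r - c)) h]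
  omega

lemma card_O2 (hcn : c ≤ n) : (O2 n c).card = c := by
  unfold O2
  have h : (Finset.univ.filter fun i : Fin n => n - c ≤ (i : ℕ))
      = Finset.univ.filter fun i : Fin n => n - c ≤ (i : ℕ) ∧ (i : ℕ) < n := by
    ext x
    simp only [Finset.mem_filter, Finset.mem_univ, true_and]
    exact ⟨fun hx => ⟨hx, x.isLt⟩, fun hx => hx.1⟩
  rw [h, card_univ_val_window (n - c) n le_rfl]
  omega

lemma sum_drop (hr : r ≤ n) (hb : b + r < n) (hc : c < r)
    (g : ℕ → ℕ → MvPolynomial (Fin 2) K) :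
    ∑ A ∈ Finset.univ.filter
        (fun A : Finset (Fin n) => regBe n r b c A = r - c ∧ regDe n r b c A = 0),
      g (regEp n c A) (regAl n b A)
      = ∑ ST ∈ (Z1 n b).powerset ×ˢ (O2 n c).powerset, g ST.2.card ST.1.card := by
  have hO1card : (O1 n r b c).card = r - c := card_O1 (by omega)
  apply Finset.sum_nbij'
    (i := fun A => (A.filter (fun i : Fin n => (i : ℕ) < b),
                    A.filter (fun i : Fin n => n - c ≤ (i : ℕ))))
    (j := fun ST => ST.1 ∪ ((O1 n r b c) ∪ ST.2))
  · -- hi : maps into the product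
    intro A _
    rw [Finset.mem_product]
    constructor
    · rw [Finset.mem_powerset]
      intro x hx
      rw [Finset.mem_filter] at hx
      unfold Z1
      rw [Finset.mem_filter]
      exact ⟨Finset.mem_univ _, hx.2⟩
    · rw [Finset.mem_powerset]
      intro x hx
      rw [Finset.mem_filter] at hx
      unfold O2
      rw [Finset.mem_filter]
      exact ⟨Finset.mem_univ _, hx.2⟩
  · -- hj : union lies in dropset
    rintro ⟨S, T⟩ hST
    rw [Finset.mem_product, Finset.mem_powerset, Finset.mem_powerset] at hST
    obtain ⟨hS, hT⟩ := hST
    have hSval : ∀ x ∈ S, (x : ℕ) < b := by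
      intro x hx
      have := hS hx
      unfold Z1 at this
      rw [Finset.mem_filter] at this
      exact this.2
    have hTval : ∀ x ∈ T, n - c ≤ (x : ℕ) := by
      intro x hx
      have := hT hx
      unfold O2 at this
      rw [Finset.mem_filter] at this
      exact this.2
    rw [Finset.mem_filter]
    refine ⟨Finset.mem_univ _, ?_, ?_⟩
    · unfold regBe
      have hfe : ((S ∪ ((O1 n r b c) ∪ T)).filter
          fun i : Fin n => b ≤ (i : ℕ) ∧ (i : ℕ) < b + (r - c)) = O1 n r b c := by
        ext x
        rw [Finset.mem_filter, Finset.mem_union, Finset.mem_union]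
        unfold O1
        rw [Finset.mem_filter]
        constructor
        · rintro ⟨hmem, hcond⟩
          exact ⟨Finset.mem_univ _, hcond⟩
        · rintro ⟨-, hcond⟩
          constructor
          · right; left
            exact ⟨Finset.mem_univ _, hcond⟩
          · exact hcond
      rw [hfe, hO1card]
    · unfold regDe
      rw [Finset.card_eq_zero, Finset.eq_empty_iff_forall_notMem]
      intro x hx
      rw [Finset.mem_filter, Finset.mem_union, Finset.mem_union] at hx
      obtain ⟨hmem, hc1, hc2⟩ := hx
      rcases hmem with h | h | h
      · have := hSval x h; omega
      · unfold O1 at h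
        rw [Finset.mem_filter] at h
        omega
      · have := hTval x h; omega
  · -- left inverse
    intro A hA
    rw [Finset.mem_filter] at hA
    obtain ⟨-, hbe, hde⟩ := hA
    have hO1sub : O1 n r b c ⊆ A := by
      have hsub : (A.filter fun i : Fin n => b ≤ (i : ℕ) ∧ (i : ℕ) < b + (r - c))
          ⊆ O1 n r b c := by
        intro x hx
        rw [Finset.mem_filter] at hx
        unfold O1
        rw [Finset.mem_filter]
        exact ⟨Finset.mem_univ _, hx.2⟩
      have heq : (A.filter fun i : Fin n => b ≤ (i : ℕ) ∧ (i : ℕ) < b + (r - c))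
          = O1 n r b c := by
        apply Finset.eq_of_subset_of_card_le hsub
        rw [hO1card]
        exact le_of_eq hbe.symm
      intro x hx
      rw [← heq] at hx
      exact Finset.mem_of_mem_filter x hx
    have hmid : ∀ x ∈ A, ¬ (b + (r - c) ≤ (x : ℕ) ∧ (x : ℕ) < n - c) := by
      intro x hx hcond
      unfold regDe at hde
      rw [Finset.card_eq_zero, Finset.eq_empty_iff_forall_notMem] at hde
      exact hde x (Finset.mem_filter.mpr ⟨hx, hcond⟩)
    ext x
    rw [Finset.mem_union, Finset.mem_union, Finset.mem_filter, Finset.mem_filter]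
    constructor
    · rintro ((⟨h, -⟩) | h | ⟨h, -⟩)
      · exact h
      · exact hO1sub h
      · exact h
    · intro hx
      by_cases h1 : (x : ℕ) < b
      · exact Or.inl ⟨hx, h1⟩
      · by_cases h2 : (x : ℕ) < b + (r - c)
        · refine Or.inr (Or.inl ?_)
          unfold O1
          rw [Finset.mem_filter]
          exact ⟨Finset.mem_univ _, by omega, h2⟩
        · have h3 : n - c ≤ (x : ℕ) := by
            by_contra h4
            exact hmid x hx ⟨by omega, by omega⟩
          exact Or.inr (Or.inr ⟨hx, h3⟩)
  · -- right inverse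
    rintro ⟨S, T⟩ hST
    rw [Finset.mem_product, Finset.mem_powerset, Finset.mem_powerset] at hST
    obtain ⟨hS, hT⟩ := hST
    have hSval : ∀ x ∈ S, (x : ℕ) < b := by
      intro x hx
      have := hS hx
      unfold Z1 at this
      rw [Finset.mem_filter] at this
      exact this.2
    have hTval : ∀ x ∈ T, n - c ≤ (x : ℕ) := by
      intro x hx
      have := hT hx
      unfold O2 at this
      rw [Finset.mem_filter] at this
      exact this.2
    have hO1val : ∀ x ∈ O1 n r b c, b ≤ (x : ℕ) ∧ (x : ℕ) < b + (r - c) := by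
      intro x hx
      unfold O1 at hx
      rw [Finset.mem_filter] at hx
      exact hx.2
    have e1 : ((S ∪ ((O1 n r b c) ∪ T)).filter fun i : Fin n => (i : ℕ) < b) = S := by
      ext x
      rw [Finset.mem_filter, Finset.mem_union, Finset.mem_union]
      constructor
      · rintro ⟨h | h | h, hlt⟩
        · exact h
        · have := hO1val x h; omega
        · have := hTval x h; omega
      · intro h
        exact ⟨Or.inl h, hSval x h⟩
    have e2 : ((S ∪ ((O1 n r b c) ∪ T)).filter fun i : Fin n => n - c ≤ (i : ℕ)) = T := by
      ext x
      rw [Finset.mem_filter, Finset.mem_union, Finset.mem_union]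
      constructor
      · rintro ⟨h | h | h, hge⟩
        · have := hSval x h; omega
        · have := hO1val x h; omega
        · exact h
      · intro h
        exact ⟨Or.inr (Or.inr h), hTval x h⟩
    exact Prod.ext e1 e2
  · -- values agree
    intro A _
    rfl

lemma sum_powerset_card {M : Type*} [AddCommMonoid M] {α : Type*} (Z : Finset α) (g : ℕ → M) :
    ∑ S ∈ Z.powerset, g S.card = ∑ k ∈ Finset.range (Z.card + 1), Z.card.choose k • g k := by
  rw [Finset.sum_powerset]
  apply Finset.sum_congr rfl
  intro k _
  have h : ∀ T ∈ Finset.powersetCard k Z, g T.card = g k := by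
    intro T hT
    rw [Finset.mem_powersetCard] at hT
    rw [hT.2]
  rw [Finset.sum_congr rfl h, Finset.sum_const, Finset.card_powersetCard]

lemma key_identity (hr : r ≤ n) (hb : b + r < n) (hc : c < r) :
    freedomTutte K (sA n r b c) - freedomTutte K (sB n r b c)
      = ∑ u ∈ Finset.range (c + 1), ∑ v ∈ Finset.range (b + 1),
          (c.choose u * b.choose v) • dP K u v := by
  rw [freedomTutte_sA K n r b c hr (by omega) (by omega),
    freedomTutte_sB K n r b c hr hb hc, ← Finset.sum_sub_distrib]
  have hterm : ∀ A : Finset (Fin n),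
      (X 0 - 1) ^ (r - rkA n r b c A) * (X 1 - 1) ^ (A.card - rkA n r b c A)
        - (X 0 - 1) ^ (r - rkB n r b c A) * (X 1 - 1) ^ (A.card - rkB n r b c A)
      = if regBe n r b c A = r - c ∧ regDe n r b c A = 0
        then dP K (c - regEp n c A) (regAl n b A) else 0 :=
    fun A => term_diff K hr hb hc A
  rw [Finset.sum_congr rfl (fun A _ => hterm A), ← Finset.sum_filter]
  rw [sum_drop K hr hb hc (fun x y => dP K (c - x) y)]
  rw [Finset.sum_product]
  have hZ1 : (Z1 n b).card = b := card_Z1 (by omega)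
  have hO2 : (O2 n c).card = c := card_O2 (by omega)
  calc ∑ S ∈ (Z1 n b).powerset, ∑ T ∈ (O2 n c).powerset, dP K (c - T.card) S.card
      = ∑ S ∈ (Z1 n b).powerset, ∑ k ∈ Finset.range (c + 1),
          c.choose k • dP K (c - k) S.card := by
        apply Finset.sum_congr rfl
        intro S _
        have := sum_powerset_card (O2 n c) (fun k => dP K (c - k) S.card)
        rw [hO2] at this
        exact this
    _ = ∑ S ∈ (Z1 n b).powerset, ∑ u ∈ Finset.range (c + 1),
          c.choose u • dP K u S.card := by
        apply Finset.sum_congr rfl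
        intro S _
        apply Finset.sum_nbij' (i := fun k => c - k) (j := fun u => c - u)
        · intro a ha; rw [Finset.mem_range] at ha ⊢; omega
        · intro a ha; rw [Finset.mem_range] at ha ⊢; omega
        · intro a ha; rw [Finset.mem_range] at ha; omega
        · intro a ha; rw [Finset.mem_range] at ha; omega
        · intro a ha
          rw [Finset.mem_range] at ha
          congr 1
          rw [← Nat.choose_symm (by omega : c - a ≤ c)]
          congr 1
          omega
    _ = ∑ v ∈ Finset.range (b + 1), b.choose v •
          ∑ u ∈ Finset.range (c + 1), c.choose u • dP K u v := by
        have := sum_powerset_card (Z1 n b)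
          (fun v => ∑ u ∈ Finset.range (c + 1), c.choose u • dP K u v)
        rw [hZ1] at this
        exact this
    _ = ∑ v ∈ Finset.range (b + 1), ∑ u ∈ Finset.range (c + 1),
          (c.choose u * b.choose v) • dP K u v := by
        apply Finset.sum_congr rfl
        intro v _
        rw [Finset.smul_sum]
        apply Finset.sum_congr rfl
        intro u _
        rw [smul_smul]
        congr 1
        exact Nat.mul_comm _ _
    _ = ∑ u ∈ Finset.range (c + 1), ∑ v ∈ Finset.range (b + 1),
          (c.choose u * b.choose v) • dP K u v := Finset.sum_comm

end Key2

section MatroidSide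

variable {n : ℕ} (M : Matroid (Fin n))

lemma mrank_le_card (A : Finset (Fin n)) : mrank M ↑A ≤ A.card := by
  apply Finset.sup_le
  intro I hI
  rw [Finset.mem_filter] at hI
  exact Finset.card_le_card (Finset.coe_subset.mp hI.2.2)

lemma mrank_mono (A B : Finset (Fin n)) (h : A ⊆ B) : mrank M ↑A ≤ mrank M ↑B := by
  apply Finset.sup_le
  intro I hI
  rw [Finset.mem_filter] at hI
  apply Finset.le_sup (f := Finset.card)
  rw [Finset.mem_filter]
  exact ⟨Finset.mem_univ _, hI.2.1, hI.2.2.trans (Finset.coe_subset.mpr h)⟩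

lemma mrank_insert_le (A : Finset (Fin n)) (e : Fin n) :
    mrank M ↑(insert e A) ≤ mrank M ↑A + 1 := by
  apply Finset.sup_le
  intro I hI
  rw [Finset.mem_filter] at hI
  obtain ⟨-, hind, hsub⟩ := hI
  have hcard : I.card ≤ (I.erase e).card + 1 := by
    by_cases he : e ∈ I
    · rw [Finset.card_erase_of_mem he]
      omega
    · rw [Finset.erase_eq_of_notMem he]
      omega
  have hmem : (I.erase e).card ≤ mrank M ↑A := by
    apply Finset.le_sup (f := Finset.card)
    rw [Finset.mem_filter]
    refine ⟨Finset.mem_univ _, hind.subset (Finset.coe_subset.mpr (Finset.erase_subset e I)), ?_⟩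
    intro x hx
    rw [Finset.mem_coe, Finset.mem_erase] at hx
    have hx2 := hsub (Finset.mem_coe.mpr hx.2)
    rw [Finset.coe_insert, Set.mem_insert_iff] at hx2
    rcases hx2 with h | h
    · exact absurd h hx.1
    · exact h
  omega

lemma mrank_union_le (A C : Finset (Fin n)) : mrank M ↑(A ∪ C) ≤ mrank M ↑A + C.card := by
  induction C using Finset.induction_on with
  | empty => rw [Finset.union_empty]; simp
  | @insert x s hx ih =>
    rw [Finset.union_insert]
    calc mrank M ↑(insert x (A ∪ s)) ≤ mrank M ↑(A ∪ s) + 1 := mrank_insert_le M _ x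
      _ ≤ mrank M ↑A + s.card + 1 := by omega
      _ = mrank M ↑A + (insert x s).card := by rw [Finset.card_insert_of_notMem hx]; omega

lemma mrank_lower (A : Finset (Fin n)) :
    mrank M Set.univ ≤ mrank M ↑A + (n - A.card) := by
  have h1 : (Finset.univ : Finset (Fin n)) = A ∪ (Finset.univ \ A) := by
    rw [Finset.union_sdiff_of_subset (Finset.subset_univ A)]
  have h2 := mrank_union_le M A (Finset.univ \ A)
  rw [← h1, Finset.coe_univ] at h2
  have h3 : (Finset.univ \ A).card = n - A.card := by
    rw [Finset.card_sdiff_of_subset (Finset.subset_univ A), Finset.card_univ, Fintype.card_fin]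
  omega

end MatroidSide

section Assembly

variable (K : Type*) [Field K]
variable {n r : ℕ}

/-- the span of the freedom Tutte polynomials -/
noncomputable def TSpanF (n r : ℕ) : Submodule K (MvPolynomial (Fin 2) K) :=
  Submodule.span K (freedomTutte K '' ↑(seqs n r))

lemma mem_seqs (l : List Bool) (hlen : l.length = n) (hcount : l.count true = r) :
    l ∈ seqs n r := by
  unfold seqs
  rw [Finset.mem_filter]
  refine ⟨?_, hcount⟩
  rw [Finset.mem_image]
  subst hlen
  exact ⟨l.get, Finset.mem_univ _, List.ofFn_get l⟩

lemma freedomTutte_mem (s : List Bool) (hlen : s.length = n) (hcount : s.count true = r) :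
    freedomTutte K s ∈ TSpanF K n r :=
  Submodule.subset_span ⟨s, Finset.mem_coe.mpr (mem_seqs s hlen hcount), rfl⟩

lemma dP_mem (hr : r ≤ n) :
    ∀ k u v : ℕ, u + v = k → u < r → v < n - r → dP K u v ∈ TSpanF K n r := by
  intro k
  induction k using Nat.strong_induction_on with
  | _ k ih =>
    intro u v huv hu hv
    have hkey := key_identity K (n := n) (r := r) (b := v) (c := u) hr (by omega) hu
    have hprod : ∑ u' ∈ Finset.range (u + 1), ∑ v' ∈ Finset.range (v + 1),
          (u.choose u' * v.choose v') • dP K u' v'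
        = ∑ p ∈ Finset.range (u + 1) ×ˢ Finset.range (v + 1),
          (u.choose p.1 * v.choose p.2) • dP K p.1 p.2 := by
      rw [Finset.sum_product]
    have hmemuv : (u, v) ∈ Finset.range (u + 1) ×ˢ Finset.range (v + 1) := by
      rw [Finset.mem_product, Finset.mem_range, Finset.mem_range]
      omega
    have hsplit : ∑ p ∈ Finset.range (u + 1) ×ˢ Finset.range (v + 1),
          (u.choose p.1 * v.choose p.2) • dP K p.1 p.2
        = dP K u v + ∑ p ∈ (Finset.range (u + 1) ×ˢ Finset.range (v + 1)).erase (u, v),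
          (u.choose p.1 * v.choose p.2) • dP K p.1 p.2 := by
      rw [← Finset.add_sum_erase _ _ hmemuv]
      rw [Nat.choose_self, Nat.choose_self]
      simp
    have hrest : ∑ p ∈ (Finset.range (u + 1) ×ˢ Finset.range (v + 1)).erase (u, v),
        (u.choose p.1 * v.choose p.2) • dP K p.1 p.2 ∈ TSpanF K n r := by
      apply Submodule.sum_mem
      intro p hp
      rw [Finset.mem_erase, Finset.mem_product, Finset.mem_range, Finset.mem_range] at hp
      obtain ⟨hne, hp1, hp2⟩ := hp
      have hlt : p.1 + p.2 < k := by
        rcases Nat.lt_or_ge (p.1 + p.2) k with h | h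
        · exact h
        · exfalso
          have e1 : p.1 = u := by omega
          have e2 : p.2 = v := by omega
          exact hne (Prod.ext e1 e2)
      have := ih (p.1 + p.2) hlt p.1 p.2 rfl (by omega) (by omega)
      exact AddSubmonoid.nsmul_mem (Submodule.toAddSubmonoid _) this _
    have hAmem : freedomTutte K (sA n r v u) ∈ TSpanF K n r :=
      freedomTutte_mem K _ (length_sA n r v u (by omega) (by omega))
        (count_sA n r v u (by omega))
    have hBmem : freedomTutte K (sB n r v u) ∈ TSpanF K n r :=
      freedomTutte_mem K _ (length_sB n r v u (by omega) hu) (count_sB n r v u hu)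
    have heq : dP K u v = (freedomTutte K (sA n r v u) - freedomTutte K (sB n r v u))
        - ∑ p ∈ (Finset.range (u + 1) ×ˢ Finset.range (v + 1)).erase (u, v),
          (u.choose p.1 * v.choose p.2) • dP K p.1 p.2 := by
      rw [hkey, hprod, hsplit]
      abel
    rw [heq]
    exact Submodule.sub_mem _ (Submodule.sub_mem _ hAmem hBmem) hrest

lemma tele_mem (hr : r ≤ n) :
    ∀ (d i j : ℕ), i + d ≤ r → i + d ≤ j → j ≤ i + (n - r) → j ≤ n →
    eP K (r - (i + d)) (j - (i + d)) - eP K (r - i) (j - i) ∈ TSpanF K n r := by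
  intro d
  induction d with
  | zero =>
    intro i j _ _ _ _
    simp only [Nat.add_zero, sub_self]
    exact Submodule.zero_mem _
  | succ d ihd =>
    intro i j h1 h2 h3 h4
    have hfirst : eP K (r - (i + (d+1))) (j - (i + (d+1))) - eP K (r - (i + d)) (j - (i + d))
        = dP K (r - (i + d + 1)) (j - (i + d + 1)) := by
      unfold dP
      have ea : r - (i + d) = (r - (i + d + 1)) + 1 := by omega
      have eb : j - (i + d) = (j - (i + d + 1)) + 1 := by omega
      rw [ea, eb]
      rfl
    have hmem1 : dP K (r - (i + d + 1)) (j - (i + d + 1)) ∈ TSpanF K n r := by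
      apply dP_mem K hr (r - (i + d + 1) + (j - (i + d + 1))) _ _ rfl
      · omega
      · omega
    have hmem2 := ihd i j (by omega) (by omega) h3 h4
    have hcomb : eP K (r - (i + (d+1))) (j - (i + (d+1))) - eP K (r - i) (j - i)
        = (eP K (r - (i + (d+1))) (j - (i + (d+1))) - eP K (r - (i + d)) (j - (i + d)))
          + (eP K (r - (i + d)) (j - (i + d)) - eP K (r - i) (j - i)) := by
      abel
    rw [hcomb, hfirst]
    exact Submodule.add_mem _ hmem1 hmem2

lemma tutte_mem (rk : Finset (Fin n) → ℕ) (hr : r ≤ n)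
    (h1 : ∀ A : Finset (Fin n), rk A ≤ A.card) (h2 : ∀ A : Finset (Fin n), rk A ≤ r)
    (h3 : ∀ A : Finset (Fin n), r ≤ rk A + (n - A.card)) :
    tutte K r rk ∈ TSpanF K n r := by
  have href : tutte K r (fun A : Finset (Fin n) => min A.card r) = freedomTutte K (sA n r 0 0) := by
    rw [freedomTutte_sA K n r 0 0 hr (by omega) (by omega)]
    unfold tutte
    apply Finset.sum_congr rfl
    intro A _
    have hA : rkA n r 0 0 A = min A.card r := by
      unfold rkA
      have e1 : (A.filter fun i : Fin n => 0 ≤ (i : ℕ)) = A :=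
        Finset.filter_true_of_mem (fun i _ => Nat.zero_le _)
      have e2 : (A.filter fun i : Fin n => n - 0 ≤ (i : ℕ)) = ∅ := by
        rw [Finset.eq_empty_iff_forall_notMem]
        intro x hx
        rw [Finset.mem_filter] at hx
        have := x.isLt
        omega
      rw [e1, e2]
      simp
    rw [hA]
  have hrefmem : freedomTutte K (sA n r 0 0) ∈ TSpanF K n r :=
    freedomTutte_mem K _ (length_sA n r 0 0 (by omega) (by omega)) (count_sA n r 0 0 (by omega))
  have hdiff : tutte K r rk - tutte K r (fun A : Finset (Fin n) => min A.card r)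
      ∈ TSpanF K n r := by
    unfold tutte
    rw [← Finset.sum_sub_distrib]
    apply Submodule.sum_mem
    intro A _
    have hcardn : A.card ≤ n := by
      have := Finset.card_le_univ A
      rwa [Fintype.card_fin] at this

    have htele := tele_mem K hr (min A.card r - rk A) (rk A) A.card
      (by have := h1 A; have := h2 A; omega)
      (by have := h1 A; have := h2 A; omega)
      (by have := h3 A; omega) hcardn
    have hexp : rk A + (min A.card r - rk A) = min A.card r := by
      have := h1 A; have := h2 A; omega
    rw [hexp] at htele
    have := Submodule.neg_mem _ htele
    rw [neg_sub] at this
    exact this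
  have : tutte K r rk = (tutte K r rk - tutte K r (fun A : Finset (Fin n) => min A.card r))
      + freedomTutte K (sA n r 0 0) := by
    rw [← href]
    abel
  rw [this]
  exact Submodule.add_mem _ hdiff hrefmem

end Assembly

end FreedomAux

/-- The Tutte polynomial of every `(n,r)`-matroid is a `K`-linear
combination of the Tutte polynomials of the rank-`r` size-`n` freedom matroids. -/
theorem tutte_mem_span_freedomTutte (K : Type*) [Field K] (n r : ℕ) (M : Matroid (Fin n))
    (hE : M.E = Set.univ) (hr : mrank M Set.univ = r) :
    ∃ c : List Bool → K,
      tutte K r (fun A : Finset (Fin n) => mrank M ↑A) =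
        ∑ s ∈ seqs n r, c s • freedomTutte K s := by
  classical
  have hmu : mrank M ↑(Finset.univ : Finset (Fin n)) = r := by
    rwa [Finset.coe_univ]
  have hrn : r ≤ n := by
    have h := FreedomAux.mrank_le_card M Finset.univ
    rw [hmu] at h
    rwa [Finset.card_univ, Fintype.card_fin] at h
  have hmem : tutte K r (fun A : Finset (Fin n) => mrank M ↑A) ∈ FreedomAux.TSpanF K n r := by
    apply FreedomAux.tutte_mem K _ hrn
    · exact fun A => FreedomAux.mrank_le_card M A
    · intro A
      have h := FreedomAux.mrank_mono M A Finset.univ (Finset.subset_univ A)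
      rw [hmu] at h
      exact h
    · intro A
      have h := FreedomAux.mrank_lower M A
      rw [hr] at h
      exact h
  rw [FreedomAux.TSpanF, Finsupp.mem_span_image_iff_linearCombination] at hmem
  obtain ⟨l, hl, hrepr⟩ := hmem
  refine ⟨fun s => l s, ?_⟩
  rw [← hrepr, Finsupp.linearCombination_apply, Finsupp.sum]
  apply Finset.sum_subset
  · intro x hx
    have h := (Finsupp.mem_supported K l).mp hl
    exact Finset.mem_coe.mp (h hx)
  · intro x _ hx
    rw [Finsupp.notMem_support_iff.mp hx, zero_smul]
end
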